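/- arXiv:1512.06621 — 5 statements merged into one kernel-verified Lean document; each statement's English description precedes it below -/
import Mathlib

section
/- If T is a densely defined closed right linear operator in a quaternionic Hilbert space H, then its bounded transform Z_T = T(I + T*T)^{-1/2} satisfies N(Z_T) = N(T) and R(Z_T) = R(T). -/
noncomputable section

open MulOpposite

local notation "ℍ" => Quaternion ℝ

variable {H : Type*} [NormedAddCommGroup H] [Module ℍᵐᵒᵖ H]

/-- The axioms of a quaternion-valued inner product compatible with the norm on a
right quaternionic module `H` (scalars act on the right via `ℍᵐᵒᵖ`). -/
structure QInner (inn : H → H → ℍ) : Prop where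
  add_right : ∀ u v w : H, inn u (v + w) = inn u v + inn u w
  smul_right : ∀ (u v : H) (q : ℍ), inn u (op q • v) = inn u v * q
  conj_symm : ∀ u v : H, inn u v = star (inn v u)
  norm_sq : ∀ u : H, inn u u = ((‖u‖ ^ 2 : ℝ) : ℍ)

/-- `B` is the adjoint of the bounded right linear operator `A`. -/
def IsAdjB (inn : H → H → ℍ) (A B : H →L[ℍᵐᵒᵖ] H) : Prop :=
  ∀ x y : H, inn (B x) y = inn x (A y)

/-- `A` is a positive bounded operator. -/
def IsPosB (inn : H → H → ℍ) (A : H →L[ℍᵐᵒᵖ] H) : Prop :=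
  IsAdjB inn A A ∧ ∀ x : H, ∃ r : ℝ, 0 ≤ r ∧ inn x (A x) = (r : ℍ)

/-- Orthogonal complement of a set. -/
def qOrth (inn : H → H → ℍ) (S : Set H) : Set H := {x | ∀ y ∈ S, inn y x = 0}

/-- Null space of a bounded operator. -/
def kerB (A : H →L[ℍᵐᵒᵖ] H) : Set H := {x | A x = 0}

/-- `U` is a partial isometry: it is isometric on `N(U)^⊥`. -/
def IsPartialIsomB (inn : H → H → ℍ) (U : H →L[ℍᵐᵒᵖ] H) : Prop :=
  ∀ x ∈ qOrth inn (kerB U), ‖U x‖ = ‖x‖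

/-- Null space of an unbounded operator. -/
def pKer (T : H →ₗ.[ℍᵐᵒᵖ] H) : Set H := {x | ∃ hx : x ∈ T.domain, T ⟨x, hx⟩ = 0}

/-- Range of an unbounded operator. -/
def pRan (T : H →ₗ.[ℍᵐᵒᵖ] H) : Set H := Set.range fun x : T.domain => T x

/-- `S` is the adjoint of the densely defined operator `T` : the formal adjoint
identity holds and the domain of `S` is maximal. -/
def IsAdjP (inn : H → H → ℍ) (T S : H →ₗ.[ℍᵐᵒᵖ] H) : Prop :=
  (∀ (x : S.domain) (y : T.domain), inn (x : H) (T y) = inn (S x) (y : H)) ∧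
  ∀ x z : H, (∀ y : T.domain, inn x (T y) = inn z (y : H)) → x ∈ S.domain

/-- `T` is a positive (self-adjoint) unbounded operator. -/
def IsPosP (inn : H → H → ℍ) (T : H →ₗ.[ℍᵐᵒᵖ] H) : Prop :=
  IsAdjP inn T T ∧ ∀ x : T.domain, ∃ r : ℝ, 0 ≤ r ∧ inn (x : H) (T x) = (r : ℍ)

/-- `C = S ∘ T` as unbounded operators, with the usual maximal domain. -/
def IsCompP (S T C : H →ₗ.[ℍᵐᵒᵖ] H) : Prop :=
  (∀ x : H, x ∈ C.domain ↔ ∃ hx : x ∈ T.domain, T ⟨x, hx⟩ ∈ S.domain) ∧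
  ∀ (x : C.domain) (hx : (x : H) ∈ T.domain) (h2 : T ⟨x, hx⟩ ∈ S.domain),
    C x = S ⟨T ⟨x, hx⟩, h2⟩

/-- `T = U ∘ P` where `U` is bounded and `T`, `P` are unbounded. -/
def EqCompB (T : H →ₗ.[ℍᵐᵒᵖ] H) (U : H →L[ℍᵐᵒᵖ] H) (P : H →ₗ.[ℍᵐᵒᵖ] H) : Prop :=
  T.domain = P.domain ∧
  ∀ (x : H) (hx : x ∈ T.domain) (hx' : x ∈ P.domain), T ⟨x, hx⟩ = U (P ⟨x, hx'⟩)

/-- The bounded operator `B` commutes with the unbounded operator `T`, i.e. `TB ⊆ BT`. -/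
def CommP (B : H →L[ℍᵐᵒᵖ] H) (T : H →ₗ.[ℍᵐᵒᵖ] H) : Prop :=
  ∀ x : T.domain, ∃ h : B (x : H) ∈ T.domain, T ⟨B (x : H), h⟩ = B (T x)


section AuxLemmas

variable {inn : H → H → ℍ}

lemma qi_zero_right (h : QInner inn) (u : H) : inn u 0 = 0 := by
  have h1 : inn u 0 + inn u 0 = inn u 0 + 0 := by
    rw [← h.add_right, add_zero, add_zero]
  exact add_left_cancel h1

lemma qi_zero_left (h : QInner inn) (u : H) : inn 0 u = 0 := by
  rw [h.conj_symm, qi_zero_right h, star_zero]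

lemma qi_neg_right (h : QInner inn) (u v : H) : inn u (-v) = -inn u v := by
  have h1 : (op (-1 : ℍ)) • v = -v := by
    have h2 : (op (-1 : ℍ)) = (-1 : ℍᵐᵒᵖ) := rfl
    rw [h2, neg_one_smul]
  rw [← h1, h.smul_right, mul_neg_one]

lemma qi_sub_right (h : QInner inn) (u v w : H) : inn u (v - w) = inn u v - inn u w := by
  rw [sub_eq_add_neg, h.add_right, qi_neg_right h, ← sub_eq_add_neg]

lemma qi_add_left (h : QInner inn) (u v w : H) : inn (u + v) w = inn u w + inn v w := by
  rw [h.conj_symm, h.add_right, star_add, ← h.conj_symm, ← h.conj_symm]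

lemma qi_sub_left (h : QInner inn) (u v w : H) : inn (u - v) w = inn u w - inn v w := by
  rw [h.conj_symm, qi_sub_right h, star_sub, ← h.conj_symm, ← h.conj_symm]

lemma qi_eq_zero (h : QInner inn) {u : H} (hu : inn u u = 0) : u = 0 := by
  rw [h.norm_sq] at hu
  have h1 : (‖u‖ ^ 2 : ℝ) = 0 :=
    Quaternion.coe_injective (R := ℝ) (by rw [hu, Quaternion.coe_zero])
  have h2 : ‖u‖ = 0 := by nlinarith [norm_nonneg u]
  exact norm_eq_zero.mp h2

/-- `bseq C g` is the sequence `g, ψ g, ψ² g, …` where `ψ w = w - C (C w)`. -/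
def bseq (C : H →L[ℍᵐᵒᵖ] H) (g : H) : ℕ → H
  | 0 => g
  | n + 1 => bseq C g n - C (C (bseq C g n))

lemma bseq_zero (C : H →L[ℍᵐᵒᵖ] H) (g : H) : bseq C g 0 = g := rfl

lemma bseq_succ (C : H →L[ℍᵐᵒᵖ] H) (g : H) (n : ℕ) :
    bseq C g (n + 1) = bseq C g n - C (C (bseq C g n)) := rfl

end AuxLemmas

set_option maxHeartbeats 2000000 in
/-- the bounded transform `Z_T = T (I + T*T)^{-1/2}` of a densely defined
closed right linear operator `T` satisfies `N(Z_T) = N(T)` and `R(Z_T) = R(T)`.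
Here `Ts = T*`, `TsT = T*T`, and `C` is the positive square root of `(I + T*T)⁻¹`,
so that `Z x = T (C x)`. -/
theorem boundedTransform_ker_and_ran
    [CompleteSpace H] (inn : H → H → ℍ) (hinn : QInner inn)
    (T Ts TsT : H →ₗ.[ℍᵐᵒᵖ] H) (Z C : H →L[ℍᵐᵒᵖ] H)
    (hdense : Dense (T.domain : Set H))
    (hclosed : IsClosed (T.graph : Set (H × H)))
    (hadj : IsAdjP inn T Ts) (hcomp : IsCompP Ts T TsT)
    (hCpos : IsPosB inn C)
    (hCdom : ∀ x : H, C (C x) ∈ TsT.domain)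
    (hCinv : ∀ x : H, C (C x) + TsT ⟨C (C x), hCdom x⟩ = x)
    (hCinv' : ∀ x : TsT.domain, C (C ((x : H) + TsT x)) = (x : H))
    (hZ : ∀ x : H, ∃ h : C x ∈ T.domain, Z x = T ⟨C x, h⟩) :
    kerB Z = pKer T ∧ Set.range Z = pRan T := by
  -- membership of dom T*T in dom T
  have domle : ∀ {x : H}, x ∈ TsT.domain → x ∈ T.domain := by
    intro x hx
    obtain ⟨h1, -⟩ := (hcomp.1 x).mp hx
    exact h1
  -- the basic adjoint pairing
  have pair : ∀ (w : TsT.domain) (hw : (w : H) ∈ T.domain) (y : T.domain),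
      inn (TsT w) (y : H) = inn (T ⟨(w : H), hw⟩) (T y) := by
    intro w hw y
    obtain ⟨hw', h2⟩ := (hcomp.1 w).mp w.2
    rw [hcomp.2 w hw' h2]
    exact (hadj.1 ⟨T ⟨(w : H), hw'⟩, h2⟩ y).symm
  -- if T*T w = 0 then T w = 0
  have K1 : ∀ (w : H) (hw : w ∈ TsT.domain), TsT ⟨w, hw⟩ = 0 →
      ∃ h : w ∈ T.domain, T ⟨w, h⟩ = 0 := by
    intro w hw h0
    have hw' : w ∈ T.domain := domle hw
    refine ⟨hw', ?_⟩
    have h3 := pair ⟨w, hw⟩ hw' ⟨w, hw'⟩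
    rw [h0, qi_zero_left hinn] at h3
    exact qi_eq_zero hinn h3.symm
  constructor
  · -- kernel equality
    ext x
    constructor
    · intro hx
      have hx' : Z x = 0 := hx
      obtain ⟨hCx, hZx⟩ := hZ x
      have hTCx : T ⟨C x, hCx⟩ = 0 := by rw [← hZx]; exact hx'
      have h2 : T ⟨C x, hCx⟩ ∈ Ts.domain := by rw [hTCx]; exact zero_mem _
      have hmem : C x ∈ TsT.domain := (hcomp.1 (C x)).mpr ⟨hCx, h2⟩
      have hTsT0 : TsT ⟨C x, hmem⟩ = 0 := by
        rw [hcomp.2 ⟨C x, hmem⟩ hCx h2,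
          show (⟨T ⟨C x, hCx⟩, h2⟩ : Ts.domain) = 0 from Subtype.ext hTCx, Ts.map_zero]
      -- C (C (C x)) = C x
      have h3 : C (C (C x + TsT ⟨C x, hmem⟩)) = C x := hCinv' ⟨C x, hmem⟩
      rw [hTsT0, add_zero] at h3
      -- w := x - C (C x) satisfies C (C w) = 0
      have h4 : C (C (x - C (C x))) = 0 := by
        rw [map_sub, map_sub, h3, sub_self]
      have h5 : C (x - C (C x)) = 0 := by
        apply qi_eq_zero hinn
        rw [hCpos.1 (x - C (C x)) (C (x - C (C x))), h4, qi_zero_right hinn]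
      have h6 : x - C (C x) = 0 := by
        have h7 := hCinv (x - C (C x))
        rw [show (⟨C (C (x - C (C x))), hCdom (x - C (C x))⟩ : TsT.domain) = 0
            from Subtype.ext h4, TsT.map_zero, add_zero, h4] at h7
        exact h7.symm
      have h8 : C (C x) = x := by
        have := sub_eq_zero.mp h6
        exact this.symm
      have hmem2 : x ∈ TsT.domain := h8 ▸ hCdom x
      have hTsTx : TsT ⟨x, hmem2⟩ = 0 := by
        have h9 := hCinv x
        rw [show (⟨C (C x), hCdom x⟩ : TsT.domain) = ⟨x, hmem2⟩ from Subtype.ext h8, h8] at h9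
        exact add_eq_left.mp h9
      exact K1 x hmem2 hTsTx
    · rintro ⟨hxT, hTx⟩
      have h2 : T ⟨x, hxT⟩ ∈ Ts.domain := by rw [hTx]; exact zero_mem _
      have hmem : x ∈ TsT.domain := (hcomp.1 x).mpr ⟨hxT, h2⟩
      have hTsT0 : TsT ⟨x, hmem⟩ = 0 := by
        rw [hcomp.2 ⟨x, hmem⟩ hxT h2,
          show (⟨T ⟨x, hxT⟩, h2⟩ : Ts.domain) = 0 from Subtype.ext hTx, Ts.map_zero]
      have h3 : C (C x) = x := by
        have h4 := hCinv' ⟨x, hmem⟩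
        rwa [hTsT0, add_zero] at h4
      have h4 : C (C (C x)) = C x := by rw [h3]
      have hmem2 : C x ∈ TsT.domain := h4 ▸ hCdom (C x)
      have hTsTCx : TsT ⟨C x, hmem2⟩ = 0 := by
        have h5 := hCinv (C x)
        rw [show (⟨C (C (C x)), hCdom (C x)⟩ : TsT.domain) = ⟨C x, hmem2⟩
          from Subtype.ext h4, h4] at h5
        exact add_eq_left.mp h5
      obtain ⟨hCxT, hTCx⟩ := K1 (C x) hmem2 hTsTCx
      obtain ⟨hCx', hZx⟩ := hZ x
      show Z x = 0
      rw [hZx]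
      exact hTCx
  · -- range equality
    apply Set.Subset.antisymm
    · rintro y ⟨x, rfl⟩
      obtain ⟨h, e⟩ := hZ x
      exact ⟨⟨C x, h⟩, e.symm⟩
    · rintro y ⟨g, rfl⟩
      -- g : T.domain; goal : T g ∈ Set.range Z
      set s : ℕ → H := bseq C (g : H) with hs_def
      have hs0 : s 0 = (g : H) := rfl
      have hss : ∀ n, s (n + 1) = s n - C (C (s n)) := fun n => rfl
      have hsmem : ∀ n, s n ∈ T.domain := by
        intro n
        induction n with
        | zero => exact g.2
        | succ n ih => rw [hss n]; exact sub_mem ih (domle (hCdom (s n)))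
      -- F1 : the fundamental identity
      have F1 : ∀ (u : H) (hu : u ∈ T.domain) (v : H),
          inn u (C (C v)) + inn (T ⟨u, hu⟩) (T ⟨C (C v), domle (hCdom v)⟩) = inn u v := by
        intro u hu v
        have e2 : inn (T ⟨u, hu⟩) (T ⟨C (C v), domle (hCdom v)⟩)
            = inn u (TsT ⟨C (C v), hCdom v⟩) := by
          rw [hinn.conj_symm (T ⟨u, hu⟩),
            ← pair ⟨C (C v), hCdom v⟩ (domle (hCdom v)) ⟨u, hu⟩, ← hinn.conj_symm]
        rw [e2, ← hinn.add_right, hCinv v]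
      have F1' : ∀ (u : H) (hu : u ∈ T.domain) (v : H),
          inn (C (C v)) u + inn (T ⟨C (C v), domle (hCdom v)⟩) (T ⟨u, hu⟩) = inn v u := by
        intro u hu v
        rw [hinn.conj_symm (C (C v)), hinn.conj_symm (T ⟨C (C v), domle (hCdom v)⟩),
          ← star_add, F1 u hu v, ← hinn.conj_symm]
      -- the graph inner products
      set gip : ℕ → ℕ → ℍ :=
        fun a b => inn (s a) (s b) + inn (T ⟨s a, hsmem a⟩) (T ⟨s b, hsmem b⟩) with hgip
      have hTss : ∀ a, T ⟨s (a + 1), hsmem (a + 1)⟩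
          = T ⟨s a, hsmem a⟩ - T ⟨C (C (s a)), domle (hCdom (s a))⟩ := by
        intro a
        have e1 : (⟨s (a + 1), hsmem (a + 1)⟩ : T.domain)
            = ⟨s a, hsmem a⟩ - ⟨C (C (s a)), domle (hCdom (s a))⟩ :=
          Subtype.ext (hss a)
        rw [e1, T.map_sub]
      have stepL : ∀ a b, gip (a + 1) b = gip a b - inn (s a) (s b) := by
        intro a b
        simp only [hgip]
        rw [hTss a, hss a, qi_sub_left hinn, qi_sub_left hinn, sub_add_sub_comm,
          F1' (s b) (hsmem b) (s a)]
      have stepR : ∀ a b, gip a (b + 1) = gip a b - inn (s a) (s b) := by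
        intro a b
        simp only [hgip]
        rw [hTss b, hss b, qi_sub_right hinn, qi_sub_right hinn, sub_add_sub_comm,
          F1 (s a) (hsmem a) (s b)]
      have shift : ∀ n m, gip n m = gip 0 (n + m) := by
        intro n
        induction n with
        | zero => intro m; rw [Nat.zero_add]
        | succ n ih =>
          intro m
          rw [stepL n m, ← stepR n m, ih (m + 1), show n + (m + 1) = n + 1 + m by omega]
      have gip_diag : ∀ j, gip j j = ((‖s j‖ ^ 2 + ‖T ⟨s j, hsmem j⟩‖ ^ 2 : ℝ) : ℍ) := by
        intro j
        simp only [hgip]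
        rw [hinn.norm_sq, hinn.norm_sq, Quaternion.coe_add]
      have odd1 : ∀ j, gip 0 (j + j + 1) = ((‖T ⟨s j, hsmem j⟩‖ ^ 2 : ℝ) : ℍ) := by
        intro j
        have h2 : gip j (j + 1) = gip 0 (j + j + 1) := by
          rw [shift j (j + 1), show j + (j + 1) = j + j + 1 by omega]
        rw [← h2, stepR j j, gip_diag j, hinn.norm_sq, Quaternion.coe_add]
        abel
      -- the W quantity is nonnegative
      have Wcore : ∀ (w : TsT.domain) (hwT : (w : H) ∈ T.domain),
          inn ((w : H) + TsT w) (TsT w)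
            = ((‖T ⟨(w : H), hwT⟩‖ ^ 2 + ‖(TsT w : H)‖ ^ 2 : ℝ) : ℍ) := by
        intro w hwT
        rw [qi_add_left hinn, hinn.conj_symm ((w : H)), pair w hwT ⟨(w : H), hwT⟩,
          hinn.norm_sq, hinn.norm_sq, Quaternion.star_coe, Quaternion.coe_add]
      have Wgen : ∀ v : H, inn v (TsT ⟨C (C v), hCdom v⟩)
          = ((‖T ⟨C (C v), domle (hCdom v)⟩‖ ^ 2 + ‖(TsT ⟨C (C v), hCdom v⟩ : H)‖ ^ 2 : ℝ) : ℍ) := by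
        intro v
        have h : inn (C (C v) + TsT ⟨C (C v), hCdom v⟩) (TsT ⟨C (C v), hCdom v⟩)
            = ((‖T ⟨C (C v), domle (hCdom v)⟩‖ ^ 2 + ‖(TsT ⟨C (C v), hCdom v⟩ : H)‖ ^ 2 : ℝ) : ℍ) :=
          Wcore ⟨C (C v), hCdom v⟩ (domle (hCdom v))
        rwa [hCinv v] at h
      have mono2 : ∀ j, ‖s (j + 1)‖ ^ 2 + ‖T ⟨s (j + 1), hsmem (j + 1)⟩‖ ^ 2
          ≤ ‖T ⟨s j, hsmem j⟩‖ ^ 2 := by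
        intro j
        have h1 := stepL j (j + 1)
        have h2 : gip j (j + 1) = ((‖T ⟨s j, hsmem j⟩‖ ^ 2 : ℝ) : ℍ) := by
          rw [stepR j j, gip_diag j, hinn.norm_sq, Quaternion.coe_add]; abel
        have h3 : inn (s j) (s (j + 1))
            = ((‖T ⟨C (C (s j)), domle (hCdom (s j))⟩‖ ^ 2
                + ‖(TsT ⟨C (C (s j)), hCdom (s j)⟩ : H)‖ ^ 2 : ℝ) : ℍ) := by
          rw [hss j,
            show s j - C (C (s j)) = (TsT ⟨C (C (s j)), hCdom (s j)⟩ : H) from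
              (eq_sub_of_add_eq' (hCinv (s j))).symm]
          exact Wgen (s j)
        rw [gip_diag (j + 1), h2, h3] at h1
        have h5 : (‖s (j + 1)‖ ^ 2 + ‖T ⟨s (j + 1), hsmem (j + 1)⟩‖ ^ 2 : ℝ)
            = ‖T ⟨s j, hsmem j⟩‖ ^ 2
              - (‖T ⟨C (C (s j)), domle (hCdom (s j))⟩‖ ^ 2
                + ‖(TsT ⟨C (C (s j)), hCdom (s j)⟩ : H)‖ ^ 2) := by
          apply Quaternion.coe_injective (R := ℝ)
          rw [Quaternion.coe_sub]
          exact h1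
        have h6 := pow_nonneg (norm_nonneg (T ⟨C (C (s j)), domle (hCdom (s j))⟩)) 2
        have h7 := pow_nonneg (norm_nonneg ((TsT ⟨C (C (s j)), hCdom (s j)⟩ : H))) 2
        linarith
      -- the real sequence r
      set r : ℕ → ℝ := fun k => (gip 0 k).re with hr
      have bq_real : ∀ k, gip 0 k = ((r k : ℝ) : ℍ) := by
        intro k
        rcases Nat.even_or_odd k with ⟨j, hj⟩ | ⟨j, hj⟩
        · subst hj
          simp only [hr]
          rw [← shift j j, gip_diag j, Quaternion.re_coe]
        · subst hj
          simp only [hr]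
          rw [show 2 * j + 1 = j + j + 1 by omega, odd1 j, Quaternion.re_coe]
      have r_even : ∀ j, r (j + j) = ‖s j‖ ^ 2 + ‖T ⟨s j, hsmem j⟩‖ ^ 2 := by
        intro j
        simp only [hr]
        rw [← shift j j, gip_diag j, Quaternion.re_coe]
      have r_odd : ∀ j, r (j + j + 1) = ‖T ⟨s j, hsmem j⟩‖ ^ 2 := by
        intro j
        simp only [hr]
        rw [odd1 j, Quaternion.re_coe]
      have r_nonneg : ∀ k, 0 ≤ r k := by
        intro k
        rcases Nat.even_or_odd k with ⟨j, hj⟩ | ⟨j, hj⟩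
        · subst hj; rw [r_even j]; positivity
        · subst hj
          rw [show 2 * j + 1 = j + j + 1 by omega, r_odd j]; positivity
      have r_succ_le : ∀ k, r (k + 1) ≤ r k := by
        intro k
        rcases Nat.even_or_odd k with ⟨j, hj⟩ | ⟨j, hj⟩
        · subst hj
          rw [r_even j, r_odd j]
          have := pow_nonneg (norm_nonneg (s j)) 2
          linarith
        · subst hj
          rw [show 2 * j + 1 + 1 = (j + 1) + (j + 1) by omega,
            show 2 * j + 1 = j + j + 1 by omega, r_even (j + 1), r_odd j]
          exact mono2 j
      -- the key identity
      have key : ∀ n m, ‖s n - s m‖ ^ 2 + ‖T ⟨s n, hsmem n⟩ - T ⟨s m, hsmem m⟩‖ ^ 2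
          = r (n + n) + r (m + m) - (r (n + m) + r (n + m)) := by
        intro n m
        have hq : ((‖s n - s m‖ ^ 2 + ‖T ⟨s n, hsmem n⟩ - T ⟨s m, hsmem m⟩‖ ^ 2 : ℝ) : ℍ)
            = gip n n + gip m m - (gip n m + gip m n) := by
          rw [Quaternion.coe_add, ← hinn.norm_sq, ← hinn.norm_sq]
          simp only [hgip, qi_sub_left hinn, qi_sub_right hinn]
          abel
        have e1 : gip n n = ((r (n + n) : ℝ) : ℍ) := by rw [shift n n, bq_real]
        have e2 : gip m m = ((r (m + m) : ℝ) : ℍ) := by rw [shift m m, bq_real]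
        have e3 : gip n m = ((r (n + m) : ℝ) : ℍ) := by rw [shift n m, bq_real]
        have e4 : gip m n = ((r (n + m) : ℝ) : ℍ) := by
          rw [shift m n, show m + n = n + m by omega, bq_real]
        apply Quaternion.coe_injective (R := ℝ)
        rw [hq, e1, e2, e3, e4, Quaternion.coe_sub, Quaternion.coe_add, Quaternion.coe_add]
      -- limits of r
      have rant : Antitone r := antitone_nat_of_succ_le r_succ_le
      have rbdd : BddBelow (Set.range r) := ⟨0, by rintro x ⟨k, rfl⟩; exact r_nonneg k⟩
      have rlim : Filter.Tendsto r Filter.atTop (nhds (⨅ k, r k)) :=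
        tendsto_atTop_ciInf rant rbdd
      have hLle : ∀ k, (⨅ k, r k) ≤ r k := fun k => ciInf_le rbdd k
      have tendsto_rkk : Filter.Tendsto (fun k => r (k + k)) Filter.atTop (nhds (⨅ k, r k)) :=
        rlim.comp (Filter.tendsto_atTop_mono (fun k => Nat.le_add_left k k) Filter.tendsto_id)
      -- criterion for Cauchy sequences
      have hcau : ∀ v : ℕ → H,
          (∀ n m, ‖v n - v m‖ ^ 2 ≤ r (n + n) + r (m + m) - (r (n + m) + r (n + m))) →
          CauchySeq v := by
        intro v hv
        rw [Metric.cauchySeq_iff]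
        intro ε hε
        have hLeps : (⨅ k, r k) < (⨅ k, r k) + ε ^ 2 / 2 := by
          have := pow_pos hε 2; linarith
        obtain ⟨N, hN⟩ := (tendsto_rkk.eventually_lt_const hLeps).exists
        refine ⟨N, fun m hm n hn => ?_⟩
        have h1 := hv m n
        have h2 : r (m + m) ≤ r (N + N) := rant (by omega)
        have h3 : r (n + n) ≤ r (N + N) := rant (by omega)
        have h4 : (⨅ k, r k) ≤ r (m + n) := hLle _
        have h5 : ‖v m - v n‖ ^ 2 < ε ^ 2 := by linarith
        rw [dist_eq_norm]
        nlinarith [norm_nonneg (v m - v n)]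
      -- the z-sequence is in dom T*T
      have hzmem : ∀ n, (g : H) - s n ∈ TsT.domain := by
        intro n
        induction n with
        | zero => rw [hs0, sub_self]; exact zero_mem _
        | succ n ih =>
          have e : (g : H) - s (n + 1) = ((g : H) - s n) + C (C (s n)) := by
            rw [hss n]; abel
          rw [e]; exact add_mem ih (hCdom (s n))
      set u : ℕ → H := fun n => C (((g : H) - s n) + TsT ⟨(g : H) - s n, hzmem n⟩) with hu
      have hCu : ∀ n, C (u n) = (g : H) - s n := fun n => hCinv' ⟨(g : H) - s n, hzmem n⟩
      -- key identity for u
      have ukey : ∀ n m, ‖u n - u m‖ ^ 2 = r (n + n) + r (m + m) - (r (n + m) + r (n + m)) := by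
        intro n m
        have hd : s m - s n ∈ TsT.domain := by
          have e : s m - s n = ((g : H) - s n) - ((g : H) - s m) := by abel
          rw [e]; exact sub_mem (hzmem n) (hzmem m)
        have e0 : u n - u m = C ((s m - s n) + TsT ⟨s m - s n, hd⟩) := by
          simp only [hu]
          rw [← map_sub]
          congr 1
          have e1 : TsT ⟨(g : H) - s n, hzmem n⟩ - TsT ⟨(g : H) - s m, hzmem m⟩
              = TsT ⟨s m - s n, hd⟩ := by
            rw [← TsT.map_sub]
            congr 1
            apply Subtype.ext
            show ((g : H) - s n) - ((g : H) - s m) = s m - s n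
            abel
          rw [← e1]; abel
        have e2 : ((‖u n - u m‖ ^ 2 : ℝ) : ℍ)
            = inn (s m - s n) (s m - s n)
              + inn (T ⟨s m - s n, domle hd⟩) (T ⟨s m - s n, domle hd⟩) := by
          rw [← hinn.norm_sq, e0, hCpos.1, hCinv' ⟨s m - s n, hd⟩, qi_add_left hinn]
          congr 1
          exact pair ⟨s m - s n, hd⟩ (domle hd) ⟨s m - s n, domle hd⟩
        have e4 : T ⟨s m - s n, domle hd⟩ = T ⟨s m, hsmem m⟩ - T ⟨s n, hsmem n⟩ := by
          rw [show (⟨s m - s n, domle hd⟩ : T.domain) = ⟨s m, hsmem m⟩ - ⟨s n, hsmem n⟩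
            from Subtype.ext (by simp), T.map_sub]
        rw [e4, hinn.norm_sq, hinn.norm_sq, ← Quaternion.coe_add] at e2
        have e6 : ‖u n - u m‖ ^ 2
            = ‖s m - s n‖ ^ 2 + ‖T ⟨s m, hsmem m⟩ - T ⟨s n, hsmem n⟩‖ ^ 2 :=
          Quaternion.coe_injective (R := ℝ) e2
        rw [e6, key m n, show m + n = n + m by omega]
        ring
      -- s converges to 0
      have cau_s : CauchySeq s := by
        apply hcau s
        intro n m
        have h1 := key n m
        have h2 := pow_nonneg (norm_nonneg (T ⟨s n, hsmem n⟩ - T ⟨s m, hsmem m⟩)) 2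
        linarith
      obtain ⟨p, hp⟩ := cauchySeq_tendsto_of_complete cau_s
      have hCCp : C (C p) = 0 := by
        have h1 : Filter.Tendsto (fun n => s (n + 1)) Filter.atTop (nhds p) :=
          hp.comp (Filter.tendsto_add_atTop_nat 1)
        have h2 : Filter.Tendsto (fun n => s n - C (C (s n))) Filter.atTop
            (nhds (p - C (C p))) :=
          hp.sub (((C.continuous.comp C.continuous).tendsto p).comp hp)
        have h3 : (fun n => s (n + 1)) = fun n => s n - C (C (s n)) := funext hss
        rw [h3] at h1
        have h4 := tendsto_nhds_unique h1 h2
        exact add_eq_left.mp (eq_sub_iff_add_eq.mp h4)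
      have hp0 : p = 0 := by
        have h1 := hCinv p
        rw [show (⟨C (C p), hCdom p⟩ : TsT.domain) = 0 from Subtype.ext hCCp,
          TsT.map_zero, add_zero, hCCp] at h1
        exact h1.symm
      -- u converges; its limit is the desired preimage
      have cau_u : CauchySeq u := hcau u fun n m => le_of_eq (ukey n m)
      obtain ⟨w, hw⟩ := cauchySeq_tendsto_of_complete cau_u
      have hCw : C w = (g : H) := by
        have h1 : Filter.Tendsto (fun n => C (u n)) Filter.atTop (nhds (C w)) :=
          (C.continuous.tendsto w).comp hw
        have h2 : (fun n => C (u n)) = fun n => (g : H) - s n := funext hCu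
        rw [h2] at h1
        have h3 : Filter.Tendsto (fun n => (g : H) - s n) Filter.atTop
            (nhds ((g : H) - p)) := tendsto_const_nhds.sub hp
        have h4 := tendsto_nhds_unique h1 h3
        rw [h4, hp0, sub_zero]
      obtain ⟨hmemZ, hZw⟩ := hZ w
      refine ⟨w, ?_⟩
      rw [hZw, show (⟨C w, hmemZ⟩ : T.domain) = g from Subtype.ext hCw]
end
end

section
/- Let H be a quaternionic Hilbert space, J an anti self-adjoint unitary operator, m ∈ S a fixed imaginary unit, and A = A₁ + A₂·n a bounded right linear operator decomposed via the slice Hilbert space H₊ = H₊^{Jm}. Then the map χ_A : H₊ ⊕ H₊ → H₊ ⊕ H₊ given by the 2×2 matrix [[A₁, A₂], [−conj(A₂), conj(A₁)]] is a bounded C_m-linear operator with ‖χ_A‖ = ‖A‖. -/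
noncomputable section

open MulOpposite

local notation "ℍ" => Quaternion ℝ

variable {H : Type*} [NormedAddCommGroup H] [Module ℍᵐᵒᵖ H]

/-- The slice Hilbert space `H₊^{Jm} = {x ∈ H : Jx = x·m}`. -/
def Hplus (J : H →L[ℍᵐᵒᵖ] H) (m : ℍ) : Set H := {x | J x = op m • x}

/-- Pairs with both components in the slice `H₊^{Jm}` (the space `H₊ ⊕ H₊`). -/
def Hplus2 (J : H →L[ℍᵐᵒᵖ] H) (m : ℍ) : Set (H × H) :=
  {p | p.1 ∈ Hplus J m ∧ p.2 ∈ Hplus J m}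

/-- The `ℂ_m`-valued inner product on `H₊ ⊕ H₊`. -/
def innP (inn : H → H → ℍ) (p q : H × H) : ℍ := inn p.1 q.1 + inn p.2 q.2

/-- The Hilbert space norm on `H₊ ⊕ H₊`. -/
def normP (p : H × H) : ℝ := Real.sqrt (‖p.1‖ ^ 2 + ‖p.2‖ ^ 2)

/-- `cj` is a conjugation of the slice `H₊^{Jm}` (e.g. the one induced by an
orthonormal basis of `H₊^{Jm}`): an additive, `ℂ_m`-antilinear, isometric involution. -/
structure IsSliceConj (inn : H → H → ℍ) (J : H →L[ℍᵐᵒᵖ] H) (m : ℍ) (cj : H → H) : Prop where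
  mem : ∀ x ∈ Hplus J m, cj x ∈ Hplus J m
  add : ∀ x y : H, cj (x + y) = cj x + cj y
  invol : ∀ x : H, cj (cj x) = x
  antilinear : ∀ x : H, cj (op m • x) = -(op m • cj x)
  inner : ∀ x ∈ Hplus J m, ∀ y ∈ Hplus J m, inn (cj x) (cj y) = inn y x

/-- `A = A₁ + A₂ · n` : the bounded right linear operator `A` decomposes along the slice
`H₊^{Jm}` into the pair of bounded `ℂ_m`-linear operators `A₁, A₂` on `H₊^{Jm}`. -/
structure IsSliceDecomp (inn : H → H → ℍ) (J : H →L[ℍᵐᵒᵖ] H) (m n : ℍ) (cj : H → H)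
    (A : H →L[ℍᵐᵒᵖ] H) (A₁ A₂ : H → H) : Prop where
  mem₁ : ∀ x ∈ Hplus J m, A₁ x ∈ Hplus J m
  mem₂ : ∀ x ∈ Hplus J m, A₂ x ∈ Hplus J m
  add₁ : ∀ x y : H, A₁ (x + y) = A₁ x + A₁ y
  add₂ : ∀ x y : H, A₂ (x + y) = A₂ x + A₂ y
  lin₁ : ∀ x : H, A₁ (op m • x) = op m • A₁ x
  lin₂ : ∀ x : H, A₂ (op m • x) = op m • A₂ x
  decomp : ∀ x ∈ Hplus J m, A x = A₁ x + op n • A₂ (cj x)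

/-- The operator matrix `χ_A = [[A₁, A₂], [-conj(A₂), conj(A₁)]]` acting on `H₊ ⊕ H₊`,
where `conj(B) = cj ∘ B ∘ cj`. -/
def chi (cj A₁ A₂ : H → H) (p : H × H) : H × H :=
  (A₁ p.1 + A₂ p.2, -(cj (A₂ (cj p.1))) + cj (A₁ (cj p.2)))

/-- The standing assumptions of the slice decomposition: `J` is anti self-adjoint and
unitary, `m, n` are anticommuting imaginary units, and `H = H₊ ⊕ H₊·n`. -/
structure SliceSetup (inn : H → H → ℍ) (J : H →L[ℍᵐᵒᵖ] H) (m n : ℍ) : Prop where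
  Jadj : IsAdjB inn J (-J)
  Junit : J.comp J = -1
  m_im : m.re = 0
  m_norm : ‖m‖ = 1
  n_im : n.re = 0
  n_norm : ‖n‖ = 1
  anticomm : m * n = -(n * m)
  split : ∀ x : H, ∃ x₁ ∈ Hplus J m, ∃ x₂ ∈ Hplus J m, x = x₁ + op n • x₂
  split_unique : ∀ x₁ ∈ Hplus J m, ∀ x₂ ∈ Hplus J m,
    x₁ + op n • x₂ = 0 → x₁ = 0 ∧ x₂ = 0

/-! ### Auxiliary lemmas for the proof of `chi_bounded_linear_norm_eq` -/

private lemma quat_star_imag {q : ℍ} (h : q.re = 0) : star q = -q := by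
  ext <;> simp [h]

private lemma quat_sq {q : ℍ} (h0 : q.re = 0) (h1 : ‖q‖ = 1) : q * q = -1 := by
  have hs : q * star q = ((Quaternion.normSq q : ℝ) : ℍ) := q.self_mul_star
  rw [quat_star_imag h0, mul_neg, Quaternion.normSq_eq_norm_mul_self, h1, one_mul] at hs
  have := neg_eq_iff_eq_neg.mp hs
  simpa using this

private lemma re_mul_comm' (a b : ℍ) : (a * b).re = (b * a).re := by
  simp only [Quaternion.re_mul]; ring

private lemma re_mul_right_unit {q m n : ℍ} (hm : m * m = -1) (hmn : m * n = -(n * m))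
    (hq : q * m = m * q) : (q * n).re = 0 := by
  have hmnm : m * n * m = n := by
    rw [hmn, neg_mul, mul_assoc, hm]; simp
  have h3 : m * (q * n * m) = q * n := by
    calc m * (q * n * m) = ((m * q) * n) * m := by rw [← mul_assoc, ← mul_assoc]
      _ = ((q * m) * n) * m := by rw [hq]
      _ = q * (m * n * m) := by rw [mul_assoc q m n, mul_assoc]
      _ = q * n := by rw [hmnm]
  have e1 : (q * n * m) * m = -(q * n) := by rw [mul_assoc, hm, mul_neg_one]
  have e2 := re_mul_comm' (q * n * m) m
  rw [e1, h3] at e2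
  simp only [Quaternion.re_neg] at e2
  linarith

section InnerAux

variable {inn : H → H → ℍ}

private lemma inn_zero_right (hinn : QInner inn) (u : H) : inn u 0 = 0 := by
  have h := hinn.add_right u 0 0
  rw [add_zero] at h
  exact (left_eq_add.mp h)

private lemma inn_add_left (hinn : QInner inn) (u v w : H) :
    inn (u + v) w = inn u w + inn v w := by
  rw [hinn.conj_symm (u + v) w, hinn.add_right, star_add, ← hinn.conj_symm, ← hinn.conj_symm]

private lemma inn_smul_left (hinn : QInner inn) (u v : H) (q : ℍ) :
    inn (op q • u) v = star q * inn u v := by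
  rw [hinn.conj_symm (op q • u) v, hinn.smul_right, star_mul, ← hinn.conj_symm]

private lemma inn_neg_left (hinn : QInner inn) (u v : H) : inn (-u) v = -inn u v := by
  have h := inn_add_left hinn u (-u) v
  rw [add_neg_cancel] at h
  have h0 : inn (0 : H) v = 0 := by
    rw [hinn.conj_symm, inn_zero_right hinn, star_zero]
  rw [h0] at h
  exact (neg_eq_of_add_eq_zero_right h.symm).symm

private lemma norm_eq_of_inn (hinn : QInner inn) {x y : H}
    (h : inn x x = inn y y) : ‖x‖ = ‖y‖ := by
  rw [hinn.norm_sq, hinn.norm_sq] at h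
  have h2 : ‖x‖ ^ 2 = ‖y‖ ^ 2 := Quaternion.coe_injective h
  nlinarith [norm_nonneg x, norm_nonneg y]

private lemma inn_comm_m (hinn : QInner inn) {J : H →L[ℍᵐᵒᵖ] H} {m n : ℍ}
    (hs : SliceSetup inn J m n) {x₁ x₂ : H}
    (h₁ : x₁ ∈ Hplus J m) (h₂ : x₂ ∈ Hplus J m) :
    inn x₁ x₂ * m = m * inn x₁ x₂ := by
  have hm : star m = -m := quat_star_imag hs.m_im
  calc inn x₁ x₂ * m = inn x₁ (op m • x₂) := (hinn.smul_right x₁ x₂ m).symm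
    _ = inn x₁ (J x₂) := by rw [h₂]
    _ = inn ((-J) x₁) x₂ := (hs.Jadj x₁ x₂).symm
    _ = inn (-(J x₁)) x₂ := by rw [ContinuousLinearMap.neg_apply]
    _ = -inn (J x₁) x₂ := inn_neg_left hinn _ _
    _ = -inn (op m • x₁) x₂ := by rw [h₁]
    _ = -(star m * inn x₁ x₂) := by rw [inn_smul_left hinn]
    _ = m * inn x₁ x₂ := by rw [hm, neg_mul, neg_neg]

private lemma pythagoras (hinn : QInner inn) {J : H →L[ℍᵐᵒᵖ] H} {m n : ℍ}
    (hs : SliceSetup inn J m n) {x₁ x₂ : H}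
    (h₁ : x₁ ∈ Hplus J m) (h₂ : x₂ ∈ Hplus J m) :
    ‖x₁ + op n • x₂‖ ^ 2 = ‖x₁‖ ^ 2 + ‖x₂‖ ^ 2 := by
  set q := inn x₁ x₂ with hq
  have hm2 : m * m = -1 := quat_sq hs.m_im hs.m_norm
  have hn2 : n * n = -1 := quat_sq hs.n_im hs.n_norm
  have hns : star n = -n := quat_star_imag hs.n_im
  have hqn : (q * n).re = 0 :=
    re_mul_right_unit hm2 hs.anticomm (inn_comm_m hinn hs h₁ h₂)
  have hlast : inn (op n • x₂) (op n • x₂) = ((‖x₂‖ ^ 2 : ℝ) : ℍ) := by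
    rw [inn_smul_left hinn, hinn.smul_right, hinn.norm_sq, hns,
      Quaternion.coe_commutes, neg_mul, ← mul_assoc, hn2]
    simp
  have E : inn (x₁ + op n • x₂) (x₁ + op n • x₂)
      = ((‖x₁‖ ^ 2 : ℝ) : ℍ) + (q * n + star (q * n)) + ((‖x₂‖ ^ 2 : ℝ) : ℍ) := by
    rw [hinn.add_right, inn_add_left hinn, inn_add_left hinn, hinn.norm_sq, hlast,
      hinn.smul_right, inn_smul_left hinn, hns]
    have h5 : -n * inn x₂ x₁ = star (q * n) := by
      rw [star_mul, hinn.conj_symm x₂ x₁, hns]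
    rw [h5, ← hq]
    abel
  have hre := congrArg QuaternionAlgebra.re E
  rw [hinn.norm_sq] at hre
  simp only [Quaternion.re_add, Quaternion.re_coe, Quaternion.re_star] at hre
  rw [hqn] at hre
  linarith

end InnerAux

private lemma Hplus_add {J : H →L[ℍᵐᵒᵖ] H} {m : ℍ} {x y : H}
    (hx : x ∈ Hplus J m) (hy : y ∈ Hplus J m) : x + y ∈ Hplus J m := by
  have hx' : J x = op m • x := hx
  have hy' : J y = op m • y := hy
  show J (x + y) = op m • (x + y)
  rw [map_add, hx', hy', smul_add]

private lemma Hplus_neg {J : H →L[ℍᵐᵒᵖ] H} {m : ℍ} {x : H}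
    (hx : x ∈ Hplus J m) : -x ∈ Hplus J m := by
  have hx' : J x = op m • x := hx
  show J (-x) = op m • (-x)
  rw [map_neg, hx', smul_neg]

private lemma addf_zero {f : H → H} (hf : ∀ x y, f (x + y) = f x + f y) : f 0 = 0 := by
  have h := hf 0 0
  rw [add_zero] at h
  exact left_eq_add.mp h

private lemma addf_neg {f : H → H} (hf : ∀ x y, f (x + y) = f x + f y) (x : H) :
    f (-x) = -f x := by
  have h := hf x (-x)
  rw [add_neg_cancel, addf_zero hf] at h
  exact (neg_eq_of_add_eq_zero_right h.symm).symm

private lemma cj_norm {inn : H → H → ℍ} (hinn : QInner inn) {J : H →L[ℍᵐᵒᵖ] H}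
    {m : ℍ} {cj : H → H} (hcj : IsSliceConj inn J m cj) {x : H}
    (hx : x ∈ Hplus J m) : ‖cj x‖ = ‖x‖ :=
  norm_eq_of_inn hinn (hcj.inner x hx x hx)

private lemma op_smul_smul_self {n : ℍ} (hn2 : n * n = -1) (v : H) :
    op n • op n • v = -v := by
  rw [smul_smul, ← op_mul, hn2]
  simp

private lemma chi_key {inn : H → H → ℍ} {J : H →L[ℍᵐᵒᵖ] H} {m n : ℍ} {cj : H → H}
    {A : H →L[ℍᵐᵒᵖ] H} {A₁ A₂ : H → H}
    (hn2 : n * n = -1) (hcj : IsSliceConj inn J m cj)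
    (hdec : IsSliceDecomp inn J m n cj A A₁ A₂)
    {x₁ x₂ : H} (h₁ : x₁ ∈ Hplus J m) (h₂ : x₂ ∈ Hplus J m) :
    A (x₁ + op n • x₂) = (A₁ x₁ + -A₂ (cj x₂)) + op n • (A₂ (cj x₁) + A₁ x₂) ∧
    chi cj A₁ A₂ (x₁, -cj x₂)
      = (A₁ x₁ + -A₂ (cj x₂), -cj (A₂ (cj x₁) + A₁ x₂)) := by
  constructor
  · have e : A (x₁ + op n • x₂) = A x₁ + op n • A x₂ := by rw [map_add, map_smul]
    rw [e, hdec.decomp x₁ h₁, hdec.decomp x₂ h₂]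
    simp only [smul_add, op_smul_smul_self hn2]
    abel
  · have e1 : cj (-cj x₂) = -x₂ := by rw [addf_neg hcj.add, hcj.invol]
    show (A₁ x₁ + A₂ (-cj x₂), -cj (A₂ (cj x₁)) + cj (A₁ (cj (-cj x₂)))) = _
    rw [e1, addf_neg hdec.add₂, addf_neg hdec.add₁, addf_neg hcj.add, hcj.add, neg_add]

private lemma chi_norm_key {inn : H → H → ℍ} (hinn : QInner inn) {J : H →L[ℍᵐᵒᵖ] H}
    {m n : ℍ} (hslice : SliceSetup inn J m n) {cj : H → H}
    (hcj : IsSliceConj inn J m cj) {A : H →L[ℍᵐᵒᵖ] H} {A₁ A₂ : H → H}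
    (hdec : IsSliceDecomp inn J m n cj A A₁ A₂)
    {x₁ x₂ : H} (h₁ : x₁ ∈ Hplus J m) (h₂ : x₂ ∈ Hplus J m) :
    normP (chi cj A₁ A₂ (x₁, -cj x₂)) = ‖A (x₁ + op n • x₂)‖ ∧
    normP ((x₁, -cj x₂) : H × H) = ‖x₁ + op n • x₂‖ ∧
    ((x₁, -cj x₂) : H × H) ∈ Hplus2 J m := by
  have hn2 : n * n = -1 := quat_sq hslice.n_im hslice.n_norm
  obtain ⟨hA, hchi⟩ := chi_key hn2 hcj hdec h₁ h₂
  have hy₁ : A₁ x₁ + -A₂ (cj x₂) ∈ Hplus J m :=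
    Hplus_add (hdec.mem₁ _ h₁) (Hplus_neg (hdec.mem₂ _ (hcj.mem _ h₂)))
  have hy₂ : A₂ (cj x₁) + A₁ x₂ ∈ Hplus J m :=
    Hplus_add (hdec.mem₂ _ (hcj.mem _ h₁)) (hdec.mem₁ _ h₂)
  refine ⟨?_, ?_, ⟨h₁, Hplus_neg (hcj.mem _ h₂)⟩⟩
  · rw [hchi]
    show Real.sqrt (‖A₁ x₁ + -A₂ (cj x₂)‖ ^ 2 + ‖-cj (A₂ (cj x₁) + A₁ x₂)‖ ^ 2) = _
    rw [norm_neg, cj_norm hinn hcj hy₂, hA, ← pythagoras hinn hslice hy₁ hy₂,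
      Real.sqrt_sq (norm_nonneg _)]
  · show Real.sqrt (‖x₁‖ ^ 2 + ‖-cj x₂‖ ^ 2) = _
    rw [norm_neg, cj_norm hinn hcj h₂, ← pythagoras hinn hslice h₁ h₂,
      Real.sqrt_sq (norm_nonneg _)]

/-- for `A = A₁ + A₂·n ∈ B(H)`, the operator matrix
`χ_A = [[A₁, A₂], [-conj(A₂), conj(A₁)]]` is a bounded `ℂ_m`-linear operator on
`H₊ ⊕ H₊` with `‖χ_A‖ = ‖A‖` (the norm equality is expressed by saying that the two
operators admit exactly the same bounds `c`). -/
theorem chi_bounded_linear_norm_eq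
    [CompleteSpace H] (inn : H → H → ℍ) (hinn : QInner inn)
    (J : H →L[ℍᵐᵒᵖ] H) (m n : ℍ) (hslice : SliceSetup inn J m n)
    (cj : H → H) (hcj : IsSliceConj inn J m cj)
    (A : H →L[ℍᵐᵒᵖ] H) (A₁ A₂ : H → H)
    (hdec : IsSliceDecomp inn J m n cj A A₁ A₂) :
    (∀ p ∈ Hplus2 J m, chi cj A₁ A₂ p ∈ Hplus2 J m) ∧
    (∀ p q : H × H, chi cj A₁ A₂ (p + q) = chi cj A₁ A₂ p + chi cj A₁ A₂ q) ∧
    (∀ p : H × H, chi cj A₁ A₂ (op m • p.1, op m • p.2)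
        = (op m • (chi cj A₁ A₂ p).1, op m • (chi cj A₁ A₂ p).2)) ∧
    (∀ c : ℝ, 0 ≤ c →
      ((∀ p ∈ Hplus2 J m, normP (chi cj A₁ A₂ p) ≤ c * normP p) ↔
        ∀ x : H, ‖A x‖ ≤ c * ‖x‖)) := by
  refine ⟨?_, ?_, ?_, ?_⟩
  · rintro p ⟨hp1, hp2⟩
    exact ⟨Hplus_add (hdec.mem₁ _ hp1) (hdec.mem₂ _ hp2),
      Hplus_add (Hplus_neg (hcj.mem _ (hdec.mem₂ _ (hcj.mem _ hp1))))
        (hcj.mem _ (hdec.mem₁ _ (hcj.mem _ hp2)))⟩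
  · intro p q
    simp only [chi, Prod.fst_add, Prod.snd_add, hdec.add₁, hdec.add₂, hcj.add,
      Prod.mk_add_mk]
    refine Prod.ext ?_ ?_ <;> dsimp <;> abel
  · intro p
    simp only [chi, hcj.antilinear, addf_neg hcj.add, addf_neg hdec.add₁,
      addf_neg hdec.add₂, hdec.lin₁, hdec.lin₂, smul_add, smul_neg, neg_neg]
  · intro c hc
    constructor
    · intro hb x
      obtain ⟨x₁, h₁, x₂, h₂, rfl⟩ := hslice.split x
      obtain ⟨e1, e2, hmem⟩ := chi_norm_key hinn hslice hcj hdec h₁ h₂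
      have hh := hb _ hmem
      rw [e1, e2] at hh
      exact hh
    · intro hb p hp
      have h₂' : -cj p.2 ∈ Hplus J m := Hplus_neg (hcj.mem _ hp.2)
      obtain ⟨e1, e2, -⟩ := chi_norm_key hinn hslice hcj hdec hp.1 h₂'
      have hp2 : -cj (-cj p.2) = p.2 := by rw [addf_neg hcj.add, hcj.invol, neg_neg]
      have hpe : ((p.1, -cj (-cj p.2)) : H × H) = p := by rw [hp2]
      rw [hpe] at e1 e2
      rw [e1, e2]
      exact hb _
end
end

section
/- For A ∈ B(H) with associated operator χ_A on H₊ ⊕ H₊: x₁ + x₂·n ∈ N(A) if and only if (x₁, −conj(x₂)) ∈ N(χ_A); x₁ + x₂·n ∈ R(A) if and only if (x₁, −conj(x₂)) ∈ R(χ_A); and the analogous equivalences hold for N(A)^⊥ and R(A)^⊥. -/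
noncomputable section

open MulOpposite

local notation "ℍ" => Quaternion ℝ

variable {H : Type*} [NormedAddCommGroup H] [Module ℍᵐᵒᵖ H]

lemma qstar_of_im (q : ℍ) (h : q.re = 0) : star q = -q := by
  ext <;> simp [h]

lemma qsq_neg_one (n : ℍ) (h1 : n.re = 0) (h2 : ‖n‖ = 1) : n * n = -1 := by
  have h3 : Quaternion.normSq n = 1 := by
    rw [Quaternion.normSq_eq_norm_mul_self, h2]; ring
  have h4 : n * star n = ((Quaternion.normSq n : ℝ) : ℍ) := Quaternion.self_mul_star n
  have h5 : star n = -n := qstar_of_im n h1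
  rw [h5, h3, mul_neg] at h4
  push_cast at h4
  exact neg_eq_iff_eq_neg.mp h4

lemma qcentral (m q : ℍ) (hm : m.re = 0) (hn : ‖m‖ = 1) (hc : q * m = m * q) :
    ∃ a b : ℝ, q = (a : ℍ) + (b : ℍ) * m := by
  have h3 : m.imI^2 + m.imJ^2 + m.imK^2 = 1 := by
    have h5 := Quaternion.normSq_eq_norm_mul_self m
    rw [hn, Quaternion.normSq_def', hm] at h5
    nlinarith [h5]
  refine ⟨q.re, q.imI*m.imI + q.imJ*m.imJ + q.imK*m.imK, ?_⟩
  have e1 := congrArg QuaternionAlgebra.imI hc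
  have e2 := congrArg QuaternionAlgebra.imJ hc
  have e3 := congrArg QuaternionAlgebra.imK hc
  simp [Quaternion.imI_mul, Quaternion.imJ_mul, Quaternion.imK_mul, hm] at e1 e2 e3
  have c1 : q.imJ*m.imK - q.imK*m.imJ = 0 := by linarith
  have c2 : q.imK*m.imI - q.imI*m.imK = 0 := by linarith
  have c3 : q.imI*m.imJ - q.imJ*m.imI = 0 := by linarith
  ext
  · simp [hm]
  · simp [hm]; linear_combination -q.imI * h3 + m.imJ * c3 - m.imK * c2
  · simp [hm]; linear_combination -q.imJ * h3 - m.imI * c3 + m.imK * c1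
  · simp [hm]; linear_combination -q.imK * h3 + m.imI * c2 - m.imJ * c1

lemma qnconj (m n q : ℍ) (hm : m.re = 0) (hmn : ‖m‖ = 1) (hanti : m * n = -(n * m))
    (hc : q * m = m * q) : n * q = star q * n := by
  obtain ⟨a, b, rfl⟩ := qcentral m q hm hmn hc
  have hsm : star m = -m := qstar_of_im m hm
  have hnm : -(m * n) = n * m := by rw [hanti, neg_neg]
  simp only [star_add, star_mul, hsm, Quaternion.star_coe]
  have e : -m * (b:ℍ) = (b:ℍ) * -m := (Quaternion.coe_commutes b (-m)).symm
  have lhs : n * ((a:ℍ) + (b:ℍ)*m) = (a:ℍ)*n + (b:ℍ)*(n*m) := by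
    rw [mul_add]
    congr 1
    · exact (Quaternion.coe_commutes a n).symm
    · rw [← mul_assoc, show n*(b:ℍ) = (b:ℍ)*n from (Quaternion.coe_commutes b n).symm,
        mul_assoc]
  have rhs : ((a:ℍ) + -m*(b:ℍ)) * n = (a:ℍ)*n + (b:ℍ)*(n*m) := by
    rw [add_mul]
    congr 1
    rw [e, mul_assoc, neg_mul, hnm]
  rw [lhs, rhs]

lemma qpq_zero (m n p q : ℍ) (hm : m ≠ 0) (hn : n ≠ 0) (hanti : m * n = -(n * m))
    (hp : p * m = m * p) (hq : q * m = m * q) (h : p + q * n = 0) : p = 0 ∧ q = 0 := by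
  have hpe : p = -(q * n) := eq_neg_of_add_eq_zero_left h
  have h5 : m * p = -(m * p) := by
    calc m * p = p * m := hp.symm
      _ = -(q * n) * m := by rw [← hpe]
      _ = -(q * (n * m)) := by rw [neg_mul, mul_assoc]
      _ = q * (m * n) := by
            have hnm : n * m = -(m * n) := by rw [hanti, neg_neg]
            rw [hnm, mul_neg, neg_neg]
      _ = (q * m) * n := by rw [mul_assoc]
      _ = m * (q * n) := by rw [hq, mul_assoc]
      _ = -(m * p) := by rw [hpe, mul_neg, neg_neg]
  have h6 : m * p = 0 := by
    have hh : (2:ℝ) • (m * p) = 0 := by rw [two_smul]; nth_rewrite 2 [h5]; simp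
    exact (smul_eq_zero.mp hh).resolve_left two_ne_zero
  have hp0 : p = 0 := ((mul_eq_zero.mp h6).resolve_left hm)
  refine ⟨hp0, ?_⟩
  rw [hp0, zero_add] at h
  exact (mul_eq_zero.mp h).resolve_right hn

lemma qstar_comm (m a : ℍ) (hm : m.re = 0) (ha : a * m = m * a) :
    star a * m = m * star a := by
  have h := congrArg star ha
  rw [star_mul, star_mul, qstar_of_im m hm, neg_mul, mul_neg, neg_inj] at h
  exact h.symm


/-- for `A ∈ B(H)` with associated operator `χ_A` on `H₊ ⊕ H₊`:
`x₁ + x₂·n ∈ N(A)` iff `(x₁, -conj x₂) ∈ N(χ_A)`; `x₁ + x₂·n ∈ R(A)` iff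
`(x₁, -conj x₂) ∈ R(χ_A)`; and the analogous equivalences for `N(A)^⊥` and
`R(A)^⊥`. -/
theorem chi_kernel_range_correspondence
    [CompleteSpace H] (inn : H → H → ℍ) (hinn : QInner inn)
    (J : H →L[ℍᵐᵒᵖ] H) (m n : ℍ) (hslice : SliceSetup inn J m n)
    (cj : H → H) (hcj : IsSliceConj inn J m cj)
    (A : H →L[ℍᵐᵒᵖ] H) (A₁ A₂ : H → H)
    (hdec : IsSliceDecomp inn J m n cj A A₁ A₂) :
    ∀ x₁ ∈ Hplus J m, ∀ x₂ ∈ Hplus J m,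
      -- null space
      ((A (x₁ + op n • x₂) = 0) ↔ chi cj A₁ A₂ (x₁, -(cj x₂)) = 0) ∧
      -- range
      ((x₁ + op n • x₂ ∈ Set.range A) ↔
        ∃ p ∈ Hplus2 J m, chi cj A₁ A₂ p = (x₁, -(cj x₂))) ∧
      -- orthogonal complement of the null space
      ((x₁ + op n • x₂ ∈ qOrth inn (kerB A)) ↔
        ∀ q ∈ Hplus2 J m, chi cj A₁ A₂ q = 0 →
          innP inn q (x₁, -(cj x₂)) = 0) ∧
      -- orthogonal complement of the range
      ((x₁ + op n • x₂ ∈ qOrth inn (Set.range A)) ↔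
        ∀ q ∈ Hplus2 J m, innP inn (chi cj A₁ A₂ q) (x₁, -(cj x₂)) = 0) := by
  obtain ⟨hJadj, hJu, hmre, hmn, hnre, hnn, hanti, hsplit, huniq⟩ := hslice
  have hm0 : m ≠ 0 := by intro h; rw [h] at hmn; simp at hmn
  have hn0 : n ≠ 0 := by intro h; rw [h] at hnn; simp at hnn
  have hn2 : n * n = -1 := qsq_neg_one n hnre hnn
  have hsn : star n = -n := qstar_of_im n hnre
  have hsm : star m = -m := qstar_of_im m hmre
  -- basic inner-product lemmas
  have innal : ∀ u v w : H, inn (u + v) w = inn u w + inn v w := fun u v w => by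
    rw [hinn.conj_symm, hinn.add_right, star_add, ← hinn.conj_symm, ← hinn.conj_symm]
  have innsl : ∀ (u v : H) (q : ℍ), inn (op q • u) v = star q * inn u v := fun u v q => by
    rw [hinn.conj_symm, hinn.smul_right, star_mul, ← hinn.conj_symm]
  have innnl : ∀ u v : H, inn (-u) v = -(inn u v) := fun u v => by
    have h := innsl u v (-1)
    rw [op_neg, op_one, neg_smul, one_smul, star_neg, star_one, neg_one_mul] at h
    exact h
  have innnr : ∀ u v : H, inn u (-v) = -(inn u v) := fun u v => by
    rw [hinn.conj_symm u (-v), innnl, star_neg, ← hinn.conj_symm]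
  have innnn : ∀ u v : H, inn (-u) (-v) = inn u v := fun u v => by
    rw [innnl, innnr, neg_neg]
  -- additive maps
  have f0 : ∀ f : H → H, (∀ x y : H, f (x + y) = f x + f y) → f 0 = 0 := fun f hf => by
    have h := hf 0 0
    rw [add_zero] at h
    exact (left_eq_add.mp h)
  have fneg : ∀ f : H → H, (∀ x y : H, f (x + y) = f x + f y) → ∀ x : H, f (-x) = -(f x) :=
    fun f hf x => by
      have h := hf x (-x)
      rw [add_neg_cancel, f0 f hf] at h
      exact (neg_eq_of_add_eq_zero_right h.symm).symm
  have cj0 : cj 0 = 0 := f0 cj hcj.add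
  have cjneg : ∀ x : H, cj (-x) = -(cj x) := fneg cj hcj.add
  have A1neg : ∀ x : H, A₁ (-x) = -(A₁ x) := fneg A₁ hdec.add₁
  have A2neg : ∀ x : H, A₂ (-x) = -(A₂ x) := fneg A₂ hdec.add₂
  have cjinj : ∀ a b : H, cj a = cj b → a = b := fun a b h => by
    rw [← hcj.invol a, h, hcj.invol]
  -- Hplus closure
  have hPadd : ∀ x ∈ Hplus J m, ∀ y ∈ Hplus J m, x + y ∈ Hplus J m := fun x hx y hy => by
    have hx' : J x = op m • x := hx
    have hy' : J y = op m • y := hy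
    show J (x + y) = op m • (x + y)
    rw [map_add, hx', hy', smul_add]
  have hPneg : ∀ x ∈ Hplus J m, -x ∈ Hplus J m := fun x hx => by
    have hx' : J x = op m • x := hx
    show J (-x) = op m • (-x)
    rw [map_neg, hx', smul_neg]
  have hPsub : ∀ x ∈ Hplus J m, ∀ y ∈ Hplus J m, x - y ∈ Hplus J m := fun x hx y hy => by
    rw [sub_eq_add_neg]; exact hPadd x hx _ (hPneg y hy)
  -- n-squared smul
  have nnsmul : ∀ y : H, op n • op n • y = -y := fun y => by
    rw [smul_smul, ← op_mul, hn2, op_neg, op_one, neg_smul, one_smul]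
  -- inner products of slice elements commute with m
  have hcm : ∀ u ∈ Hplus J m, ∀ v ∈ Hplus J m, inn u v * m = m * inn u v := fun u hu v hv => by
    have hu' : J u = op m • u := hu
    have hv' : J v = op m • v := hv
    have h := hJadj u v
    rw [ContinuousLinearMap.neg_apply, innnl, hu', hv', innsl, hinn.smul_right, hsm,
      neg_mul, neg_neg] at h
    exact h.symm
  have commst : ∀ a ∈ Hplus J m, ∀ b ∈ Hplus J m,
      star (inn a b) * m = m * star (inn a b) :=
    fun a ha b hb => qstar_comm m _ hmre (hcm a ha b hb)
  have sumcomm : ∀ {α β : ℍ}, α * m = m * α → β * m = m * β → (α + β) * m = m * (α + β) :=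
    fun h1 h2 => by rw [add_mul, mul_add, h1, h2]
  have subcomm : ∀ {α β : ℍ}, α * m = m * α → β * m = m * β → (α - β) * m = m * (α - β) :=
    fun h1 h2 => by rw [sub_mul, mul_sub, h1, h2]
  have hnq : ∀ u ∈ Hplus J m, ∀ v ∈ Hplus J m, n * inn u v = star (inn u v) * n :=
    fun u hu v hv => qnconj m n _ hmre hmn hanti (hcm u hu v hv)
  -- the inner product formula
  have innF : ∀ y₁ ∈ Hplus J m, ∀ y₂ ∈ Hplus J m, ∀ z₁ ∈ Hplus J m, ∀ z₂ ∈ Hplus J m,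
      inn (y₁ + op n • y₂) (z₁ + op n • z₂) =
        (inn y₁ z₁ + star (inn y₂ z₂)) + (inn y₁ z₂ - star (inn y₂ z₁)) * n := by
    intro y₁ hy₁ y₂ hy₂ z₁ hz₁ z₂ hz₂
    have hβ := hnq y₂ hy₂ z₂ hz₂
    have hδ := hnq y₂ hy₂ z₁ hz₁
    rw [hinn.add_right, innal, innal, hinn.smul_right, innsl, innsl, hinn.smul_right, hsn]
    rw [neg_mul, neg_mul, hδ, ← mul_assoc, hβ, mul_assoc, hn2, mul_neg_one]
    noncomm_ring
  have innP_eq : ∀ a b c d : H, innP inn (a, b) (c, d) = inn a c + inn b d :=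
    fun _ _ _ _ => rfl
  have innconj : ∀ a ∈ Hplus J m, ∀ b ∈ Hplus J m,
      inn (-(cj a)) (-(cj b)) = star (inn a b) := fun a ha b hb => by
    rw [innnn, hcj.inner a ha b hb]
    exact hinn.conj_symm b a
  -- extraction of components from a vanishing inner product
  have qsplit0 : ∀ y₁ ∈ Hplus J m, ∀ y₂ ∈ Hplus J m, ∀ z₁ ∈ Hplus J m, ∀ z₂ ∈ Hplus J m,
      inn (y₁ + op n • y₂) (z₁ + op n • z₂) = 0 →
      inn y₁ z₁ + star (inn y₂ z₂) = 0 ∧ inn y₁ z₂ - star (inn y₂ z₁) = 0 := by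
    intro y₁ hy₁ y₂ hy₂ z₁ hz₁ z₂ hz₂ h
    rw [innF y₁ hy₁ y₂ hy₂ z₁ hz₁ z₂ hz₂] at h
    exact qpq_zero m n _ _ hm0 hn0 hanti
      (sumcomm (hcm y₁ hy₁ z₁ hz₁) (commst y₂ hy₂ z₂ hz₂))
      (subcomm (hcm y₁ hy₁ z₂ hz₂) (commst y₂ hy₂ z₁ hz₁)) h
  -- the main computation
  have hcalc : ∀ y₁ ∈ Hplus J m, ∀ y₂ ∈ Hplus J m,
      A (y₁ + op n • y₂) = (A₁ y₁ - A₂ (cj y₂)) + op n • (A₂ (cj y₁) + A₁ y₂) ∧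
      chi cj A₁ A₂ (y₁, -(cj y₂)) =
        (A₁ y₁ - A₂ (cj y₂), -(cj (A₂ (cj y₁) + A₁ y₂))) := by
    intro y₁ hy₁ y₂ hy₂
    constructor
    · rw [map_add, map_smul, hdec.decomp y₁ hy₁, hdec.decomp y₂ hy₂, smul_add, nnsmul,
        smul_add]
      abel
    · show (A₁ y₁ + A₂ (-(cj y₂)), -(cj (A₂ (cj y₁))) + cj (A₁ (cj (-(cj y₂))))) = _
      have e1 : A₂ (-(cj y₂)) = -(A₂ (cj y₂)) := A2neg _
      have e2 : cj (-(cj y₂)) = -y₂ := by rw [cjneg, hcj.invol]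
      rw [e1, e2, A1neg, cjneg, hcj.add, Prod.mk.injEq]
      exact ⟨(sub_eq_add_neg _ _).symm, by abel⟩
  have memu : ∀ y₁ ∈ Hplus J m, ∀ y₂ ∈ Hplus J m, A₁ y₁ - A₂ (cj y₂) ∈ Hplus J m :=
    fun y₁ hy₁ y₂ hy₂ => hPsub _ (hdec.mem₁ y₁ hy₁) _ (hdec.mem₂ _ (hcj.mem y₂ hy₂))
  have memv : ∀ y₁ ∈ Hplus J m, ∀ y₂ ∈ Hplus J m, A₂ (cj y₁) + A₁ y₂ ∈ Hplus J m :=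
    fun y₁ hy₁ y₂ hy₂ => hPadd _ (hdec.mem₂ _ (hcj.mem y₁ hy₁)) _ (hdec.mem₁ y₂ hy₂)
  -- uniqueness of slice components
  have uniq : ∀ u ∈ Hplus J m, ∀ v ∈ Hplus J m, ∀ u' ∈ Hplus J m, ∀ v' ∈ Hplus J m,
      u + op n • v = u' + op n • v' → u = u' ∧ v = v' := by
    intro u hu v hv u' hu' v' hv' h
    have h2 : (u - u') + op n • (v - v') = 0 := by
      have h3 : (u - u') + op n • (v - v') = (u + op n • v) - (u' + op n • v') := by
        rw [smul_sub]; abel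
      rw [h3, h, sub_self]
    obtain ⟨e1, e2⟩ := huniq (u - u') (hPsub u hu u' hu') (v - v') (hPsub v hv v' hv') h2
    exact ⟨sub_eq_zero.mp e1, sub_eq_zero.mp e2⟩
  -- the kernel bridge
  have bridge : ∀ y₁ ∈ Hplus J m, ∀ y₂ ∈ Hplus J m,
      (A (y₁ + op n • y₂) = 0 ↔ chi cj A₁ A₂ (y₁, -(cj y₂)) = 0) := by
    intro y₁ hy₁ y₂ hy₂
    obtain ⟨hA, hchi⟩ := hcalc y₁ hy₁ y₂ hy₂
    constructor
    · intro h0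
      rw [hA] at h0
      obtain ⟨e1, e2⟩ := huniq _ (memu y₁ hy₁ y₂ hy₂) _ (memv y₁ hy₁ y₂ hy₂) h0
      rw [hchi, e1, e2, cj0, neg_zero]
      rfl
    · intro h0
      rw [hchi] at h0
      have e1 := congrArg Prod.fst h0
      have e2 := congrArg Prod.snd h0
      simp only [Prod.fst_zero, Prod.snd_zero, neg_eq_zero] at e1 e2
      have e3 : A₂ (cj y₁) + A₁ y₂ = 0 := cjinj _ _ (e2.trans cj0.symm)
      rw [hA, e1, e3, smul_zero, add_zero]
  intro x₁ hx₁ x₂ hx₂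
  refine ⟨bridge x₁ hx₁ x₂ hx₂, ?_, ?_, ?_⟩
  · -- range
    constructor
    · rintro ⟨y, hy⟩
      obtain ⟨y₁, hy₁, y₂, hy₂, rfl⟩ := hsplit y
      obtain ⟨hA, hchi⟩ := hcalc y₁ hy₁ y₂ hy₂
      refine ⟨(y₁, -(cj y₂)), ⟨hy₁, hPneg _ (hcj.mem y₂ hy₂)⟩, ?_⟩
      rw [hA] at hy
      obtain ⟨e1, e2⟩ := uniq _ (memu y₁ hy₁ y₂ hy₂) _ (memv y₁ hy₁ y₂ hy₂) x₁ hx₁ x₂ hx₂ hy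
      rw [hchi, e1, e2]
    · rintro ⟨⟨p₁, p₂⟩, ⟨hp₁, hp₂⟩, hp⟩
      refine ⟨p₁ + op n • (-(cj p₂)), ?_⟩
      obtain ⟨hA, hchi⟩ := hcalc p₁ hp₁ (-(cj p₂)) (hPneg _ (hcj.mem p₂ hp₂))
      have e : -(cj (-(cj p₂))) = p₂ := by rw [cjneg, neg_neg, hcj.invol]
      rw [e] at hchi
      rw [hchi] at hp
      have e1 := congrArg Prod.fst hp
      have e2 := congrArg Prod.snd hp
      simp only [neg_inj] at e1 e2
      have e3 := cjinj _ _ e2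
      rw [hA, e1, e3]
  · -- orthogonal complement of the null space
    constructor
    · intro h q hq hq0
      obtain ⟨q₁, q₂⟩ := q
      obtain ⟨hq₁, hq₂⟩ := hq
      have hy₂ : -(cj q₂) ∈ Hplus J m := hPneg _ (hcj.mem q₂ hq₂)
      have e : -(cj (-(cj q₂))) = q₂ := by rw [cjneg, neg_neg, hcj.invol]
      have hker : A (q₁ + op n • (-(cj q₂))) = 0 := by
        rw [bridge q₁ hq₁ _ hy₂, e]
        exact hq0
      have h0 := h _ hker
      obtain ⟨e1, _⟩ := qsplit0 q₁ hq₁ _ hy₂ x₁ hx₁ x₂ hx₂ h0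
      rw [innP_eq, ← e, innconj _ hy₂ x₂ hx₂]
      exact e1
    · intro h y hy
      obtain ⟨y₁, hy₁, y₂, hy₂, rfl⟩ := hsplit y
      have hy' : A (y₁ + op n • y₂) = 0 := hy
      have hch1 : chi cj A₁ A₂ (y₁, -(cj y₂)) = 0 := (bridge y₁ hy₁ y₂ hy₂).mp hy'
      have h1 := h (y₁, -(cj y₂)) ⟨hy₁, hPneg _ (hcj.mem y₂ hy₂)⟩ hch1
      rw [innP_eq, innconj y₂ hy₂ x₂ hx₂] at h1
      have hny : A (-y₂ + op n • y₁) = 0 := by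
        have e : (-y₂ + op n • y₁) = op n • (y₁ + op n • y₂) := by
          rw [smul_add, nnsmul]; abel
        rw [e, map_smul, hy', smul_zero]
      have hch2 := (bridge (-y₂) (hPneg _ hy₂) y₁ hy₁).mp hny
      have h2 := h (-y₂, -(cj y₁)) ⟨hPneg _ hy₂, hPneg _ (hcj.mem y₁ hy₁)⟩ hch2
      rw [innP_eq, innconj y₁ hy₁ x₂ hx₂, innnl] at h2
      show inn (y₁ + op n • y₂) (x₁ + op n • x₂) = 0
      rw [innF y₁ hy₁ y₂ hy₂ x₁ hx₁ x₂ hx₂]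
      have e2 : inn y₁ x₂ - star (inn y₂ x₁) = 0 := by
        have h3 := congrArg star h2
        rw [star_add, star_neg, star_star, star_zero] at h3
        rw [sub_eq_add_neg, add_comm]
        exact h3
      rw [h1, e2, zero_mul, add_zero]
  · -- orthogonal complement of the range
    constructor
    · intro h q hq
      obtain ⟨q₁, q₂⟩ := q
      obtain ⟨hq₁, hq₂⟩ := hq
      have hy₂ : -(cj q₂) ∈ Hplus J m := hPneg _ (hcj.mem q₂ hq₂)
      obtain ⟨hA, hchi⟩ := hcalc q₁ hq₁ _ hy₂
      have e : -(cj (-(cj q₂))) = q₂ := by rw [cjneg, neg_neg, hcj.invol]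
      rw [e] at hchi
      have h0 : inn (A (q₁ + op n • (-(cj q₂)))) (x₁ + op n • x₂) = 0 := h _ ⟨_, rfl⟩
      rw [hA] at h0
      obtain ⟨e1, _⟩ := qsplit0 _ (memu q₁ hq₁ _ hy₂) _ (memv q₁ hq₁ _ hy₂) x₁ hx₁ x₂ hx₂ h0
      rw [hchi, innP_eq, innconj _ (memv q₁ hq₁ _ hy₂) x₂ hx₂]
      exact e1
    · intro h z hz
      obtain ⟨y, rfl⟩ := hz
      obtain ⟨y₁, hy₁, y₂, hy₂, rfl⟩ := hsplit y
      obtain ⟨hA, hchi⟩ := hcalc y₁ hy₁ y₂ hy₂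
      have h1 := h (y₁, -(cj y₂)) ⟨hy₁, hPneg _ (hcj.mem y₂ hy₂)⟩
      rw [hchi, innP_eq, innconj _ (memv y₁ hy₁ y₂ hy₂) x₂ hx₂] at h1
      obtain ⟨hA2, hchi2⟩ := hcalc (-y₂) (hPneg _ hy₂) y₁ hy₁
      have hswap : A (-y₂ + op n • y₁) =
          -(A₂ (cj y₁) + A₁ y₂) + op n • (A₁ y₁ - A₂ (cj y₂)) := by
        have e : (-y₂ + op n • y₁) = op n • (y₁ + op n • y₂) := by
          rw [smul_add, nnsmul]; abel
        rw [e, map_smul, hA, smul_add, nnsmul]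
        abel
      obtain ⟨eu, ev⟩ := uniq _ (memu (-y₂) (hPneg _ hy₂) y₁ hy₁)
        _ (memv (-y₂) (hPneg _ hy₂) y₁ hy₁)
        _ (hPneg _ (memv y₁ hy₁ y₂ hy₂)) _ (memu y₁ hy₁ y₂ hy₂) (hA2.symm.trans hswap)
      have h2 := h (-y₂, -(cj y₁)) ⟨hPneg _ hy₂, hPneg _ (hcj.mem y₁ hy₁)⟩
      rw [hchi2, innP_eq, innconj _ (memv (-y₂) (hPneg _ hy₂) y₁ hy₁) x₂ hx₂, eu, ev,
        innnl] at h2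
      rw [hA, innF _ (memu y₁ hy₁ y₂ hy₂) _ (memv y₁ hy₁ y₂ hy₂) x₁ hx₁ x₂ hx₂]
      have e2 : inn (A₁ y₁ - A₂ (cj y₂)) x₂ - star (inn (A₂ (cj y₁) + A₁ y₂) x₁) = 0 := by
        have h3 := congrArg star h2
        rw [star_add, star_neg, star_star, star_zero] at h3
        rw [sub_eq_add_neg, add_comm]
        exact h3
      rw [h1, e2, zero_mul, add_zero]
end
end

section
/- A bounded right linear operator A on a quaternionic Hilbert space is an orthogonal projection (resp. a partial isometry) if and only if the associated complex operator χ_A on H₊ ⊕ H₊ is an orthogonal projection (resp. a partial isometry). -/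
noncomputable section

open MulOpposite

local notation "ℍ" => Quaternion ℝ

variable {H : Type*} [NormedAddCommGroup H] [Module ℍᵐᵒᵖ H]

section ChiAux


lemma chiAux_two_ne : (2:ℍ) ≠ 0 := by
  intro h
  have : ((2:ℝ):ℍ) = ((0:ℝ):ℍ) := by exact_mod_cast h
  exact (by norm_num : (2:ℝ) ≠ 0) (Quaternion.coe_injective this)

lemma chiAux_addhom {M N : Type*} [AddCommGroup M] [AddCommGroup N] (f : M → N)
    (hf : ∀ x y, f (x + y) = f x + f y) : f 0 = 0 ∧ ∀ x, f (-x) = -f x := by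
  have h := hf 0 0
  rw [add_zero] at h
  have h0 : f 0 = 0 := by
    nth_rewrite 1 [← add_zero (f 0)] at h
    exact (add_left_cancel h).symm
  refine ⟨h0, fun x => ?_⟩
  have h2 := hf x (-x)
  rw [add_neg_cancel, h0] at h2
  exact eq_neg_of_add_eq_zero_right h2.symm

lemma chiAux_mul_self (m : ℍ) (h0 : m.re = 0) (h1 : ‖m‖ = 1) : m * m = -1 := by
  have hs : star m = -m := Quaternion.star_eq_neg.mpr h0
  have h := Quaternion.self_mul_star (a := m)
  rw [hs, mul_neg] at h
  have hn : Quaternion.normSq m = 1 := by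
    rw [Quaternion.normSq_eq_norm_mul_self, h1]; ring
  rw [hn] at h
  have h2 : m * m = -(((1:ℝ):ℍ)) := neg_eq_iff_eq_neg.mp h
  simpa using h2

lemma chiAux_qdot (m n q : ℍ) (h0 : m.re = 0) (h1 : ‖m‖ = 1) (hn0 : n.re = 0)
    (hmn : m * n = -(n * m)) (hq : m * q = q * m) :
    n * q = star q * n := by
  have hnorm : m.imI^2 + m.imJ^2 + m.imK^2 = 1 := by
    have hn : Quaternion.normSq m = 1 := by
      rw [Quaternion.normSq_eq_norm_mul_self, h1]; ring
    have h2 := Quaternion.normSq_def' m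
    rw [hn, h0] at h2
    nlinarith [h2]
  have h1' := congrArg QuaternionAlgebra.imI hq
  have h2' := congrArg QuaternionAlgebra.imJ hq
  have h3' := congrArg QuaternionAlgebra.imK hq
  have h4' := congrArg QuaternionAlgebra.re hmn
  simp only [Quaternion.imI_mul, Quaternion.imJ_mul, Quaternion.imK_mul, Quaternion.re_mul,
    Quaternion.re_neg, h0, hn0, zero_mul, mul_zero, zero_add, add_zero, zero_sub, sub_zero,
    neg_neg, neg_sub] at h1' h2' h3' h4'
  have hc1 : m.imJ * q.imK = m.imK * q.imJ := by linarith
  have hc2 : m.imK * q.imI = m.imI * q.imK := by linarith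
  have hc3 : m.imI * q.imJ = m.imJ * q.imI := by linarith
  have hdot : m.imI * n.imI + m.imJ * n.imJ + m.imK * n.imK = 0 := by linarith
  ext <;>
    simp only [Quaternion.re_mul, Quaternion.imI_mul, Quaternion.imJ_mul, Quaternion.imK_mul,
      Quaternion.re_star, Quaternion.imI_star, Quaternion.imJ_star, Quaternion.imK_star,
      h0, hn0, zero_mul, mul_zero, neg_zero, zero_add, add_zero, zero_sub, sub_zero, neg_neg,
      neg_mul, mul_neg]
  · linear_combination (2*(n.imI*q.imI + n.imJ*q.imJ + n.imK*q.imK)) * hnorm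
      - 2*(m.imI*q.imI + m.imJ*q.imJ + m.imK*q.imK) * hdot
      - 2*(n.imI*m.imK - n.imK*m.imI) * hc2
      - 2*(n.imJ*m.imI - n.imI*m.imJ) * hc3
      - 2*(n.imK*m.imJ - n.imJ*m.imK) * hc1
  · ring
  · ring
  · ring

section
variable (m n : ℍ)

lemma chiAux_hmul (hm2 : m*m = -1) (x y : ℍ) : m*(x*y)*m = -((m*x*m)*(m*y*m)) := by
  have h : (m*x*m)*(m*y*m) = m*x*((m*m)*(y*m)) := by simp only [mul_assoc]
  rw [h, hm2, neg_one_mul, mul_neg, neg_neg]; simp only [mul_assoc]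

lemma chiAux_L1 (hm2 : m*m = -1) (a : ℍ) (ha : m*a = a*m) : m*a*m = -a := by
  rw [ha, mul_assoc, hm2, mul_neg_one]

lemma chiAux_mnm (hm2 : m*m = -1) (hmn : m*n = -(n*m)) : m*n*m = n := by
  rw [hmn, neg_mul, mul_assoc, hm2, mul_neg_one, neg_neg]

lemma chiAux_L2 (hm2 : m*m = -1) (hmn : m*n = -(n*m)) (a : ℍ) (ha : m*a = a*m) :
    m*(a*n)*m = a*n := by
  rw [chiAux_hmul m hm2, chiAux_L1 m hm2 a ha, chiAux_mnm m n hm2 hmn, neg_mul, neg_neg]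

lemma chiAux_L3 (hm2 : m*m = -1) (hmn : m*n = -(n*m)) (a : ℍ) (ha : m*a = a*m) :
    m*(n*a)*m = n*a := by
  rw [chiAux_hmul m hm2, chiAux_L1 m hm2 a ha, chiAux_mnm m n hm2 hmn, mul_neg, neg_neg]

lemma chiAux_L4 (hm2 : m*m = -1) (hmn : m*n = -(n*m)) (a : ℍ) (ha : m*a = a*m) :
    m*(n*a*n)*m = -(n*a*n) := by
  rw [chiAux_hmul m hm2, chiAux_L3 m n hm2 hmn a ha, chiAux_mnm m n hm2 hmn]

lemma chiAux_qzero1 (hm2 : m*m = -1) (hn2 : n*n = -1) (hmn : m*n = -(n*m)) (q : ℍ)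
    (hq : q = m*q*m) (h1 : n*q = m*(n*q)*m) : q = 0 := by
  have hnne : n ≠ 0 := by intro h; rw [h, zero_mul] at hn2; exact absurd hn2 (by norm_num)
  have e : m*(n*q)*m = -(n*q) := by
    rw [chiAux_hmul m hm2, chiAux_mnm m n hm2 hmn, ← hq]
  rw [e] at h1
  have h2 : n * q = 0 := by
    have := add_eq_zero_iff_eq_neg.mpr h1
    have h3 : (2:ℍ) * (n*q) = 0 := by rw [two_mul]; exact this
    rcases mul_eq_zero.mp h3 with h | h
    · exact absurd h chiAux_two_ne
    · exact h
  rcases mul_eq_zero.mp h2 with h | h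
  · exact absurd h hnne
  · exact h

lemma chiAux_qzero2 (hm2 : m*m = -1) (hn2 : n*n = -1) (hmn : m*n = -(n*m)) (q : ℍ)
    (hq : q = m*q*m) (h1 : q*n = m*(q*n)*m) : q = 0 := by
  have hnne : n ≠ 0 := by intro h; rw [h, zero_mul] at hn2; exact absurd hn2 (by norm_num)
  have e : m*(q*n)*m = -(q*n) := by
    rw [chiAux_hmul m hm2, chiAux_mnm m n hm2 hmn, ← hq]
  rw [e] at h1
  have h2 : q * n = 0 := by
    have := add_eq_zero_iff_eq_neg.mpr h1
    have h3 : (2:ℍ) * (q*n) = 0 := by rw [two_mul]; exact this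
    rcases mul_eq_zero.mp h3 with h | h
    · exact absurd h chiAux_two_ne
    · exact h
  rcases mul_eq_zero.mp h2 with h | h
  · exact h
  · exact absurd h hnne

end

lemma chiAux_ppart (m n a b c d : ℍ) (hm2 : m*m = -1) (hn2 : n*n = -1) (hmn : m*n = -(n*m))
    (ha : m*a = a*m) (hb : m*b = b*m) (hc : m*c = c*m) (hd : m*d = d*m)
    (hnd : n*d = star d * n) :
    (a + b*n + -(n*c) + -(n*d*n)) - m*(a + b*n + -(n*c) + -(n*d*n))*m
      = 2*(a + star d) := by
  have e1 : m*(a + b*n + -(n*c) + -(n*d*n))*m = -a + b*n + -(n*c) + (n*d*n) := by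
    rw [mul_add, mul_add, mul_add, add_mul, add_mul, add_mul, mul_neg, mul_neg, neg_mul, neg_mul,
      chiAux_L1 m hm2 a ha, chiAux_L2 m n hm2 hmn b hb, chiAux_L3 m n hm2 hmn c hc,
      chiAux_L4 m n hm2 hmn d hd, neg_neg]
  have e2 : n*d*n = -(star d) := by rw [hnd, mul_assoc, hn2, mul_neg_one]
  rw [e1, e2]
  noncomm_ring

end ChiAux

/-- `A ∈ B(H)` is an orthogonal projection (resp. a partial isometry) if
and only if the associated operator `χ_A` on `H₊ ⊕ H₊` is an orthogonal projection
(resp. a partial isometry). -/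
theorem chi_projection_partial_isometry
    [CompleteSpace H] (inn : H → H → ℍ) (hinn : QInner inn)
    (J : H →L[ℍᵐᵒᵖ] H) (m n : ℍ) (hslice : SliceSetup inn J m n)
    (cj : H → H) (hcj : IsSliceConj inn J m cj)
    (A : H →L[ℍᵐᵒᵖ] H) (A₁ A₂ : H → H)
    (hdec : IsSliceDecomp inn J m n cj A A₁ A₂) :
    -- orthogonal projection
    ((IsAdjB inn A A ∧ A.comp A = A) ↔
      ((∀ p ∈ Hplus2 J m, ∀ q ∈ Hplus2 J m,
          innP inn (chi cj A₁ A₂ p) q = innP inn p (chi cj A₁ A₂ q)) ∧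
        ∀ p ∈ Hplus2 J m, chi cj A₁ A₂ (chi cj A₁ A₂ p) = chi cj A₁ A₂ p)) ∧
    -- partial isometry
    (IsPartialIsomB inn A ↔
      ∀ p ∈ Hplus2 J m,
        (∀ q ∈ Hplus2 J m, chi cj A₁ A₂ q = 0 → innP inn q p = 0) →
          normP (chi cj A₁ A₂ p) = normP p) := by
  obtain ⟨hJadj, hJunit, hmre, hmnorm, hnre, hnnorm, hanti, hsplit, huniq⟩ := hslice
  obtain ⟨hcjmem, hcjadd, hcjinv, hcjanti, hcjinner⟩ := hcj
  obtain ⟨hmem₁, hmem₂, hadd₁, hadd₂, hlin₁, hlin₂, hdecomp⟩ := hdec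
  have hm2 : m * m = -1 := chiAux_mul_self m hmre hmnorm
  have hn2 : n * n = -1 := chiAux_mul_self n hnre hnnorm
  have hstarm : star m = -m := Quaternion.star_eq_neg.mpr hmre
  have hstarn : star n = -n := Quaternion.star_eq_neg.mpr hnre
  -- inner product basics
  have inn_add_left : ∀ u v w : H, inn (u + v) w = inn u w + inn v w := by
    intro u v w
    rw [hinn.conj_symm, hinn.add_right, star_add, ← hinn.conj_symm, ← hinn.conj_symm]
  have inn_smul_left : ∀ (u v : H) (q : ℍ), inn (op q • u) v = star q * inn u v := by
    intro u v q
    rw [hinn.conj_symm, hinn.smul_right, star_mul, ← hinn.conj_symm]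
  have hneg_op : ∀ v : H, op (-1 : ℍ) • v = -v := by
    intro v; rw [op_neg, op_one, neg_smul, one_smul]
  have inn_neg_right : ∀ u v : H, inn u (-v) = -inn u v := by
    intro u v; rw [← hneg_op, hinn.smul_right, mul_neg_one]
  have inn_neg_left : ∀ u v : H, inn (-u) v = -inn u v := by
    intro u v; rw [← hneg_op, inn_smul_left, star_neg, star_one, neg_one_mul]
  -- Hplus basics
  have hplus_add : ∀ x ∈ Hplus J m, ∀ y ∈ Hplus J m, x + y ∈ Hplus J m := by
    intro x hx y hy
    have hx' : J x = op m • x := hx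
    have hy' : J y = op m • y := hy
    show J (x + y) = op m • (x + y)
    rw [map_add, hx', hy', smul_add]
  have hplus_neg : ∀ x ∈ Hplus J m, -x ∈ Hplus J m := by
    intro x hx
    have hx' : J x = op m • x := hx
    show J (-x) = op m • (-x)
    rw [map_neg, hx', smul_neg]
  have hplus_sub : ∀ x ∈ Hplus J m, ∀ y ∈ Hplus J m, x - y ∈ Hplus J m := by
    intro x hx y hy
    have hx' : J x = op m • x := hx
    have hy' : J y = op m • y := hy
    show J (x - y) = op m • (x - y)
    rw [map_sub, hx', hy', smul_sub]
  have hplus_zero : (0 : H) ∈ Hplus J m := by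
    show J 0 = op m • 0
    rw [map_zero, smul_zero]
  -- components
  choose c₁ hc₁ c₂ hc₂ hceq using hsplit
  have hcomp : ∀ a ∈ Hplus J m, ∀ b ∈ Hplus J m,
      c₁ (a + op n • b) = a ∧ c₂ (a + op n • b) = b := by
    intro a ha b hb
    have h0 : (c₁ (a + op n • b) - a) + op n • (c₂ (a + op n • b) - b) = 0 := by
      rw [smul_sub, sub_add_sub_comm, ← hceq (a + op n • b), sub_self]
    obtain ⟨e1, e2⟩ := huniq _ (hplus_sub _ (hc₁ _) _ ha) _ (hplus_sub _ (hc₂ _) _ hb) h0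
    exact ⟨sub_eq_zero.mp e1, sub_eq_zero.mp e2⟩
  have hc₁0 : c₁ 0 = 0 := by
    have h := hcomp 0 hplus_zero 0 hplus_zero
    rw [smul_zero, add_zero] at h; exact h.1
  have hc₂0 : c₂ 0 = 0 := by
    have h := hcomp 0 hplus_zero 0 hplus_zero
    rw [smul_zero, add_zero] at h; exact h.2
  obtain ⟨hcj0, hcjneg⟩ := chiAux_addhom cj hcjadd
  obtain ⟨hA₁0, hA₁neg⟩ := chiAux_addhom A₁ hadd₁
  obtain ⟨hA₂0, hA₂neg⟩ := chiAux_addhom A₂ hadd₂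
  -- the complex-linear picture
  obtain ⟨F, hF⟩ : ∃ F : H → H × H, F = fun x => (c₁ x, -cj (c₂ x)) := ⟨_, rfl⟩
  obtain ⟨G, hG⟩ : ∃ G : H × H → H, G = fun p => p.1 - op n • cj p.2 := ⟨_, rfl⟩
  have hFmem : ∀ x, F x ∈ Hplus2 J m := by
    intro x; rw [hF]
    exact ⟨hc₁ x, hplus_neg _ (hcjmem _ (hc₂ x))⟩
  have hGF : ∀ x, G (F x) = x := by
    intro x; rw [hF, hG]
    show c₁ x - op n • cj (-cj (c₂ x)) = x
    rw [hcjneg, hcjinv, smul_neg, sub_neg_eq_add]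
    exact (hceq x).symm
  have hFG : ∀ p ∈ Hplus2 J m, F (G p) = p := by
    intro p hp
    have h2 : -cj p.2 ∈ Hplus J m := hplus_neg _ (hcjmem _ hp.2)
    have hGp : G p = p.1 + op n • (-cj p.2) := by
      rw [hG]; show p.1 - op n • cj p.2 = _
      rw [smul_neg, sub_eq_add_neg]
    obtain ⟨e1, e2⟩ := hcomp p.1 hp.1 (-cj p.2) h2
    rw [hF]
    show (c₁ (G p), -cj (c₂ (G p))) = p
    rw [hGp, e1, e2, hcjneg, hcjinv, neg_neg]
  have hG0 : G 0 = 0 := by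
    rw [hG]
    show (0 : H × H).1 - op n • cj (0 : H × H).2 = 0
    rw [show ((0 : H × H).2) = 0 from rfl, hcj0, smul_zero]
    simp
  have hF0 : F 0 = 0 := by
    rw [hF]
    show ((c₁ 0, -cj (c₂ 0)) : H × H) = 0
    rw [hc₁0, hc₂0, hcj0, neg_zero]
    rfl
  have hnn : ∀ v : H, op n • op n • v = -v := by
    intro v
    rw [smul_smul, ← op_mul, hn2, op_neg, op_one, neg_smul, one_smul]
  -- components of A x
  have hcA : ∀ x : H, c₁ (A x) = A₁ (c₁ x) - A₂ (cj (c₂ x)) ∧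
      c₂ (A x) = A₂ (cj (c₁ x)) + A₁ (c₂ x) := by
    intro x
    have e : A x = (A₁ (c₁ x) - A₂ (cj (c₂ x))) + op n • (A₂ (cj (c₁ x)) + A₁ (c₂ x)) := by
      conv_lhs => rw [hceq x]
      rw [map_add, map_smul, hdecomp (c₁ x) (hc₁ x), hdecomp (c₂ x) (hc₂ x),
        smul_add, smul_add, hnn]
      abel
    constructor
    · rw [e]
      exact (hcomp _ (hplus_sub _ (hmem₁ _ (hc₁ x)) _ (hmem₂ _ (hcjmem _ (hc₂ x))))
        _ (hplus_add _ (hmem₂ _ (hcjmem _ (hc₁ x))) _ (hmem₁ _ (hc₂ x)))).1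
    · rw [e]
      exact (hcomp _ (hplus_sub _ (hmem₁ _ (hc₁ x)) _ (hmem₂ _ (hcjmem _ (hc₂ x))))
        _ (hplus_add _ (hmem₂ _ (hcjmem _ (hc₁ x))) _ (hmem₁ _ (hc₂ x)))).2
  have hchiF : ∀ x, chi cj A₁ A₂ (F x) = F (A x) := by
    intro x
    obtain ⟨e1, e2⟩ := hcA x
    rw [hF]
    show (A₁ (c₁ x) + A₂ (-cj (c₂ x)),
        -(cj (A₂ (cj (c₁ x)))) + cj (A₁ (cj (-cj (c₂ x))))) = (c₁ (A x), -cj (c₂ (A x)))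
    rw [e1, e2]
    simp only [Prod.mk.injEq]
    constructor
    · rw [hA₂neg, sub_eq_add_neg]
    · rw [hcjneg, hcjinv, hA₁neg, hcjneg, hcjadd, neg_add]
  have hchi_eq : ∀ p ∈ Hplus2 J m, chi cj A₁ A₂ p = F (A (G p)) := by
    intro p hp
    conv_lhs => rw [← hFG p hp]
    exact hchiF (G p)
  -- commutation with m
  have hcommK : ∀ u ∈ Hplus J m, ∀ v ∈ Hplus J m, m * inn u v = inn u v * m := by
    intro u hu v hv
    have hu' : J u = op m • u := hu
    have hv' : J v = op m • v := hv
    have h1 : inn u (J v) = inn u v * m := by rw [hv', hinn.smul_right]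
    have h2 : inn (J u) v = -(m * inn u v) := by rw [hu', inn_smul_left, hstarm, neg_mul]
    have h3 : inn ((-J) u) v = inn u (J v) := hJadj u v
    rw [ContinuousLinearMap.neg_apply, inn_neg_left, h2, neg_neg, h1] at h3
    exact h3
  -- the ℂ_m-part identity
  have hpart : ∀ x y : H, inn x y - m * inn x y * m
      = 2 * (inn (c₁ x) (c₁ y) + star (inn (c₂ x) (c₂ y))) := by
    intro x y
    have e : inn x y = inn (c₁ x) (c₁ y) + inn (c₁ x) (c₂ y) * n
        + -(n * inn (c₂ x) (c₁ y)) + -(n * inn (c₂ x) (c₂ y) * n) := by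
      conv_lhs => rw [hceq x, hceq y]
      simp only [inn_add_left, hinn.add_right, hinn.smul_right, inn_smul_left, hstarn]
      noncomm_ring
    rw [e]
    exact chiAux_ppart m n _ _ _ _ hm2 hn2 hanti
      (hcommK _ (hc₁ x) _ (hc₁ y)) (hcommK _ (hc₁ x) _ (hc₂ y))
      (hcommK _ (hc₂ x) _ (hc₁ y)) (hcommK _ (hc₂ x) _ (hc₂ y))
      (chiAux_qdot m n _ hmre hmnorm hnre hanti (hcommK _ (hc₂ x) _ (hc₂ y)))
  have hKinnP : ∀ x y : H, innP inn (F x) (F y)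
      = inn (c₁ x) (c₁ y) + star (inn (c₂ x) (c₂ y)) := by
    intro x y
    rw [hF]
    show inn (c₁ x) (c₁ y) + inn (-cj (c₂ x)) (-cj (c₂ y)) = _
    rw [inn_neg_left, inn_neg_right, neg_neg, hcjinner _ (hc₂ x) _ (hc₂ y),
      hinn.conj_symm (c₂ y) (c₂ x)]
  have hPinn : ∀ x y : H, inn x y - m * inn x y * m = 2 * innP inn (F x) (F y) := by
    intro x y; rw [hKinnP]; exact hpart x y
  have hPcancel : ∀ a b : ℍ, 2 * a = 2 * b → a = b := fun a b h =>
    mul_left_cancel₀ chiAux_two_ne h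
  -- norms
  have hcjnorm : ∀ u ∈ Hplus J m, ‖cj u‖ = ‖u‖ := by
    intro u hu
    have h := hcjinner u hu u hu
    rw [hinn.norm_sq, hinn.norm_sq] at h
    have h2 : ‖cj u‖ ^ 2 = ‖u‖ ^ 2 := Quaternion.coe_injective h
    calc ‖cj u‖ = Real.sqrt (‖cj u‖ ^ 2) := (Real.sqrt_sq (norm_nonneg _)).symm
      _ = Real.sqrt (‖u‖ ^ 2) := by rw [h2]
      _ = ‖u‖ := Real.sqrt_sq (norm_nonneg _)
  have hstarcoe : ∀ r : ℝ, star ((r : ℝ) : ℍ) = ((r : ℝ) : ℍ) := by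
    intro r; ext <;> simp
  have hnormsplit : ∀ x : H, ‖x‖ ^ 2 = ‖c₁ x‖ ^ 2 + ‖c₂ x‖ ^ 2 := by
    intro x
    have h := hpart x x
    rw [hinn.norm_sq x, hinn.norm_sq (c₁ x), hinn.norm_sq (c₂ x), hstarcoe] at h
    have hl : ((‖x‖ ^ 2 : ℝ) : ℍ) - m * ((‖x‖ ^ 2 : ℝ) : ℍ) * m
        = 2 * ((‖x‖ ^ 2 : ℝ) : ℍ) := by
      rw [← Quaternion.coe_commutes, mul_assoc, hm2, mul_neg_one, sub_neg_eq_add, two_mul]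
    rw [hl] at h
    have h2 := hPcancel _ _ h
    have h3 : ((‖x‖ ^ 2 : ℝ) : ℍ) = ((‖c₁ x‖ ^ 2 + ‖c₂ x‖ ^ 2 : ℝ) : ℍ) := by
      rw [h2]; push_cast; ring
    exact Quaternion.coe_injective h3
  have hnormF : ∀ x : H, normP (F x) = ‖x‖ := by
    intro x
    rw [hF]
    show Real.sqrt (‖c₁ x‖ ^ 2 + ‖-cj (c₂ x)‖ ^ 2) = ‖x‖
    rw [norm_neg, hcjnorm _ (hc₂ x), ← hnormsplit]
    exact Real.sqrt_sq (norm_nonneg x)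
  -- main equivalences
  constructor
  · constructor
    · rintro ⟨hadj, hidem⟩
      have hA2 : ∀ x, A (A x) = A x := fun x => DFunLike.congr_fun hidem x
      have hKAdj : ∀ x y : H, innP inn (F (A x)) (F y) = innP inn (F x) (F (A y)) := by
        intro x y
        apply hPcancel
        rw [← hPinn, ← hPinn, hadj x y]
      constructor
      · intro p hp q hq
        calc innP inn (chi cj A₁ A₂ p) q = innP inn (F (A (G p))) (F (G q)) := by
              rw [hchi_eq p hp, hFG q hq]
          _ = innP inn (F (G p)) (F (A (G q))) := hKAdj _ _
          _ = innP inn p (chi cj A₁ A₂ q) := by rw [hFG p hp, hchi_eq q hq]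
      · intro p hp
        calc chi cj A₁ A₂ (chi cj A₁ A₂ p) = chi cj A₁ A₂ (F (A (G p))) := by
              rw [hchi_eq p hp]
          _ = F (A (A (G p))) := hchiF _
          _ = F (A (G p)) := by rw [hA2]
          _ = chi cj A₁ A₂ p := (hchi_eq p hp).symm
    · rintro ⟨ha, hb⟩
      have hKAdj : ∀ x y : H, innP inn (F (A x)) (F y) = innP inn (F x) (F (A y)) := by
        intro x y
        have h := ha (F x) (hFmem x) (F y) (hFmem y)
        rw [hchiF, hchiF] at h
        exact h
      constructor
      · intro x y
        have e1 : inn (A x) y - m * inn (A x) y * m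
            = inn x (A y) - m * inn x (A y) * m := by
          rw [hPinn, hPinn, hKAdj]
        have e2 : inn (A x) y * n - m * (inn (A x) y * n) * m
            = inn x (A y) * n - m * (inn x (A y) * n) * m := by
          have h := hPinn (A x) (op n • y)
          have h' := hPinn x (A (op n • y))
          rw [map_smul] at h'
          rw [hinn.smul_right] at h h'
          have h3 := hKAdj x (op n • y)
          rw [map_smul] at h3
          rw [h, h', h3]
        have hq : inn (A x) y - inn x (A y) = 0 := by
          apply chiAux_qzero2 m n hm2 hn2 hanti
          · rw [mul_sub, sub_mul]
            exact sub_eq_sub_iff_sub_eq_sub.mp e1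
          · rw [sub_mul, mul_sub, sub_mul]
            exact sub_eq_sub_iff_sub_eq_sub.mp e2
        exact sub_eq_zero.mp hq
      · ext x
        show A (A x) = A x
        calc A (A x) = G (F (A (A x))) := (hGF _).symm
          _ = G (chi cj A₁ A₂ (chi cj A₁ A₂ (F x))) := by rw [hchiF, hchiF]
          _ = G (chi cj A₁ A₂ (F x)) := by rw [hb (F x) (hFmem x)]
          _ = G (F (A x)) := by rw [hchiF]
          _ = A x := hGF _
  · constructor
    · intro hpi p hp hcond
      have hxmem : F (G p) = p := hFG p hp
      have hxorth : G p ∈ qOrth inn (kerB A) := by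
        show ∀ y ∈ kerB A, inn y (G p) = 0
        intro y hy
        have hAy : A y = 0 := hy
        have hky : chi cj A₁ A₂ (F y) = 0 := by rw [hchiF, hAy, hF0]
        have hq1 := hcond (F y) (hFmem y) hky
        have hAy' : A (op n • y) = 0 := by rw [map_smul, hAy, smul_zero]
        have hky' : chi cj A₁ A₂ (F (op n • y)) = 0 := by rw [hchiF, hAy', hF0]
        have hq2 := hcond (F (op n • y)) (hFmem _) hky'
        have e1 : inn y (G p) - m * inn y (G p) * m = 0 := by
          rw [hPinn y (G p), hxmem, hq1, mul_zero]
        have e2 : -(n * inn y (G p)) - m * -(n * inn y (G p)) * m = 0 := by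
          have h := hPinn (op n • y) (G p)
          rw [inn_smul_left, hstarn, neg_mul] at h
          rw [h, hxmem, hq2, mul_zero]
        have hqm : inn y (G p) = m * inn y (G p) * m := by
          have h := sub_eq_zero.mp e1
          exact h
        have hnq : n * inn y (G p) = m * (n * inn y (G p)) * m := by
          have h := sub_eq_zero.mp e2
          rw [mul_neg, neg_mul] at h
          exact neg_injective h
        exact chiAux_qzero1 m n hm2 hn2 hanti _ hqm hnq
      have hiso := hpi (G p) hxorth
      calc normP (chi cj A₁ A₂ p) = normP (F (A (G p))) := by rw [hchi_eq p hp]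
        _ = ‖A (G p)‖ := hnormF _
        _ = ‖G p‖ := hiso
        _ = normP (F (G p)) := (hnormF _).symm
        _ = normP p := by rw [hxmem]
    · intro hcond x hx
      have key := hcond (F x) (hFmem x) ?side
      case side =>
        intro q hq hq0
        have h1 : F (A (G q)) = 0 := by rw [← hchiF, hFG q hq, hq0]
        have hker : A (G q) = 0 := by
          calc A (G q) = G (F (A (G q))) := (hGF _).symm
            _ = G 0 := by rw [h1]
            _ = 0 := hG0
        have h0 : inn (G q) x = 0 := hx (G q) hker
        have h := hPinn (G q) x
        rw [hFG q hq, h0] at h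
        have h2 : (2 : ℍ) * innP inn q (F x) = 2 * 0 := by
          rw [mul_zero, ← h]
          simp
        exact hPcancel _ _ h2
      rw [hchiF, hnormF, hnormF] at key
      exact key
end
end

section
/- Let A be a bounded right linear operator on a quaternionic Hilbert space with polar decomposition A = U₀|A| (N(U₀) = N(A)). If U is any partial isometry with A = U|A|, then U = U₀ + V P where P is the orthogonal projection onto N(A) and V is a partial isometry from N(A) into R(A)^⊥. -/
noncomputable section

open MulOpposite

local notation "ℍ" => Quaternion ℝ

variable {H : Type*} [NormedAddCommGroup H] [Module ℍᵐᵒᵖ H]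

namespace QHelp

theorem quat_zero_of_mul_re {c : ℍ} (h : ∀ q : ℍ, (c * q).re = 0) : c = 0 := by
  have h1 := h (star c)
  rw [Quaternion.mul_star_eq_coe] at h1
  · rw [Quaternion.re_coe] at h1
    exact Quaternion.normSq_eq_zero.mp (by simpa [Quaternion.normSq_def] using h1)

theorem quat_zero_of_star_mul_re {c : ℍ} (h : ∀ q : ℍ, (star q * c).re = 0) : c = 0 := by
  have h1 := h c
  rw [Quaternion.star_mul_self, Quaternion.re_coe] at h1
  exact Quaternion.normSq_eq_zero.mp h1

variable {inn : H → H → ℍ} (hinn : QInner inn)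
include hinn

theorem zero_right (u : H) : inn u 0 = 0 := by
  have h := hinn.add_right u 0 0
  rw [add_zero] at h
  exact (left_eq_add.mp h)

theorem zero_left (v : H) : inn 0 v = 0 := by
  rw [hinn.conj_symm, zero_right hinn, star_zero]

theorem sub_right (u v w : H) : inn u (v - w) = inn u v - inn u w := by
  have h := hinn.add_right u (v - w) w
  rw [sub_add_cancel] at h
  exact (eq_sub_of_add_eq h.symm)

theorem smul_left (x y : H) (q : ℍ) : inn (op q • x) y = star q * inn x y := by
  rw [hinn.conj_symm, hinn.smul_right, star_mul, ← hinn.conj_symm]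

theorem add_left (u v w : H) : inn (u + v) w = inn u w + inn v w := by
  rw [hinn.conj_symm, hinn.add_right, star_add, ← hinn.conj_symm, ← hinn.conj_symm]

theorem sub_left (u v w : H) : inn (u - v) w = inn u w - inn v w := by
  rw [hinn.conj_symm, sub_right hinn, star_sub, ← hinn.conj_symm, ← hinn.conj_symm]

theorem re_symm (u v : H) : (inn u v).re = (inn v u).re := by
  rw [hinn.conj_symm]; simp [Quaternion.re_star]

theorem self_re (u : H) : (inn u u).re = ‖u‖ ^ 2 := by
  rw [hinn.norm_sq, Quaternion.re_coe]

theorem eq_zero_of_self (u : H) (h : (inn u u).re = 0) : u = 0 := by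
  rw [self_re hinn] at h
  simpa using pow_eq_zero_iff (n := 2) (by norm_num) |>.mp h

theorem norm_smul (q : ℍ) (x : H) : ‖op q • x‖ = ‖q‖ * ‖x‖ := by
  have h : inn (op q • x) (op q • x) = ((Quaternion.normSq q * ‖x‖ ^ 2 : ℝ) : ℍ) := by
    rw [hinn.smul_right, smul_left hinn, hinn.norm_sq, ← Quaternion.coe_commutes,
      mul_assoc, Quaternion.star_mul_self, ← Quaternion.coe_mul]
    push_cast
    exact (Quaternion.coe_commutes (Quaternion.normSq q) ((‖x‖:ℍ) ^ 2)).symm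
  have h2 : ‖op q • x‖ ^ 2 = Quaternion.normSq q * ‖x‖ ^ 2 := by
    have := self_re hinn (op q • x)
    rw [h, Quaternion.re_coe] at this
    linarith
  have hq : Quaternion.normSq q = ‖q‖ * ‖q‖ := Quaternion.normSq_eq_norm_mul_self q
  nlinarith [norm_nonneg (op q • x), norm_nonneg x, norm_nonneg q,
    mul_nonneg (norm_nonneg q) (norm_nonneg x)]

end QHelp

open QHelp in
/-- if `A = U₀ |A|` is the polar decomposition of the bounded operator `A`
(`N(U₀) = N(A)`), and `U` is any partial isometry with `A = U |A|`, then
`U = U₀ + V P` where `P` is the orthogonal projection onto `N(A)` and `V` is a partial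
isometry mapping `N(A)` into `R(A)^⊥`. Here `As = A*` and `modA = |A|`. -/
theorem polar_decomposition_general_partial_isometry
    [CompleteSpace H] (inn : H → H → ℍ) (hinn : QInner inn)
    (A As U₀ U modA P : H →L[ℍᵐᵒᵖ] H)
    (hadj : IsAdjB inn A As)
    (hmodpos : IsPosB inn modA) (hmodsq : modA.comp modA = As.comp A)
    (hU₀ : IsPartialIsomB inn U₀) (hU₀ker : kerB U₀ = kerB A)
    (hU₀fact : A = U₀.comp modA)
    (hU : IsPartialIsomB inn U) (hUfact : A = U.comp modA)
    (hPadj : IsAdjB inn P P) (hPidem : P.comp P = P)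
    (hPran : Set.range P = kerB A) :
    ∃ V : H →L[ℍᵐᵒᵖ] H, IsPartialIsomB inn V ∧
      (∀ x ∈ kerB A, V x ∈ qOrth inn (Set.range A)) ∧
      U = U₀ + V.comp P := by
  classical
  have hmod_adj : ∀ x y : H, inn (modA x) y = inn x (modA y) := hmodpos.1
  have hU₀kerI : ∀ x : H, U₀ x = 0 ↔ A x = 0 := fun x => Set.ext_iff.mp hU₀ker x
  have hPP : ∀ x, P (P x) = P x := fun x => DFunLike.congr_fun hPidem x
  have hmodsq' : ∀ x, modA (modA x) = As (A x) := fun x => DFunLike.congr_fun hmodsq x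
  have hAU₀ : ∀ x, A x = U₀ (modA x) := fun x => DFunLike.congr_fun hU₀fact x
  have hAU : ∀ x, A x = U (modA x) := fun x => DFunLike.congr_fun hUfact x
  have hU₀0 : ∀ x, A x = 0 → U₀ x = 0 := fun x hx => (hU₀kerI x).mpr hx
  have hker_mod : ∀ x, A x = 0 → modA x = 0 := by
    intro x hx
    apply QHelp.eq_zero_of_self hinn
    have h1 : inn (modA x) (modA x) = 0 := by
      rw [hmod_adj, hmodsq', hx, map_zero, QHelp.zero_right hinn]
    rw [h1, Quaternion.re_zero]
  have hmod_ker : ∀ x, modA x = 0 → A x = 0 := fun x hx => by rw [hAU₀, hx, map_zero]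
  have hq_ran_ker : ∀ (w x : H), A x = 0 → inn x (modA w) = 0 := by
    intro w x hx; rw [← hmod_adj, hker_mod x hx, QHelp.zero_left hinn]
  have hnormA : ∀ w, ‖A w‖ = ‖modA w‖ := by
    intro w
    rw [hAU₀]
    exact hU₀ _ (fun y hy => hq_ran_ker w y ((hU₀kerI y).mp hy))
  have hnormU : ∀ w, ‖U (modA w)‖ = ‖modA w‖ := fun w => by rw [← hAU, hnormA]
  -- real Hilbert space structure
  letI : Module ℝ H := Module.compHom H (algebraMap ℝ ℍᵐᵒᵖ)
  have hsm : ∀ (r : ℝ) (x : H), r • x = op (r : ℍ) • x := fun r x => rfl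
  letI : NormedSpace ℝ H :=
    { norm_smul_le := by
        intro r x
        rw [hsm, QHelp.norm_smul hinn, Quaternion.norm_coe, Real.norm_eq_abs] }
  letI : Inner ℝ H := ⟨fun u v => (inn u v).re⟩
  letI : InnerProductSpace ℝ H :=
    { norm_sq_eq_re_inner := fun x => by
        show ‖x‖ ^ 2 = (inn x x).re
        rw [QHelp.self_re hinn]
      conj_inner_symm := fun x y => by
        show starRingEnd ℝ ((inn y x).re) = (inn x y).re
        simp only [starRingEnd_apply, star_trivial]
        exact QHelp.re_symm hinn y x
      add_left := fun x y z => by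
        show (inn (x + y) z).re = (inn x z).re + (inn y z).re
        rw [QHelp.add_left hinn, Quaternion.re_add]
      smul_left := fun x y r => by
        show (inn (r • x) y).re = starRingEnd ℝ r * (inn x y).re
        rw [hsm, QHelp.smul_left hinn, Quaternion.star_coe, Quaternion.coe_mul_eq_smul,
          Quaternion.re_smul]
        simp [starRingEnd_apply] }
  -- submodules
  let NU : Submodule ℝ H :=
    { carrier := {x | U x = 0}
      add_mem' := by
        intro a b ha hb
        simp only [Set.mem_setOf_eq] at *
        rw [map_add, ha, hb, add_zero]
      zero_mem' := by simp only [Set.mem_setOf_eq, map_zero]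
      smul_mem' := by
        intro r x hx
        simp only [Set.mem_setOf_eq] at *
        rw [hsm, map_smul, hx, smul_zero] }
  have hNUc : IsClosed (NU : Set H) := by
    have h : (NU : Set H) = U ⁻¹' {0} := rfl
    rw [h]; exact IsClosed.preimage U.continuous isClosed_singleton
  haveI : CompleteSpace NU := hNUc.completeSpace_coe
  let K : Submodule ℝ H := (Submodule.span ℝ (Set.range (⇑modA))).topologicalClosure
  have hKc : IsClosed (K : Set H) := Submodule.isClosed_topologicalClosure _
  haveI : CompleteSpace K := hKc.completeSpace_coe
  have hKmem : ∀ w, modA w ∈ K :=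
    fun w => Submodule.le_topologicalClosure _ (Submodule.subset_span ⟨w, rfl⟩)
  -- quaternionic orthogonality from real, for NU
  have hNUorth_q : ∀ z, z ∈ NUᗮ → ∀ y, U y = 0 → inn y z = 0 := by
    intro z hz y hy
    apply QHelp.quat_zero_of_star_mul_re
    intro q
    rw [← QHelp.smul_left hinn]
    have hmem : op q • y ∈ NU := by
      show U (op q • y) = 0
      rw [map_smul, hy, smul_zero]
    exact (Submodule.mem_orthogonal NU z).mp hz _ hmem
  have hNU_isom : ∀ z ∈ NUᗮ, ‖U z‖ = ‖z‖ :=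
    fun z hz => hU z (fun y hy => hNUorth_q z hz y hy)
  -- range modA ⊆ NUᗮ
  have hmodNU : ∀ w, modA w ∈ NUᗮ := by
    intro w
    obtain ⟨a₁, h1, a₂, h2, hsum⟩ := NU.exists_add_mem_mem_orthogonal (modA w)
    have hUa : U (modA w) = U a₂ := by
      rw [hsum, map_add, show U a₁ = 0 from h1, zero_add]
    have h2n : ‖U a₂‖ = ‖a₂‖ := hNU_isom a₂ h2
    have horth : @inner ℝ H _ a₁ a₂ = 0 := (Submodule.mem_orthogonal NU a₂).mp h2 a₁ h1
    have hpyth : ‖modA w‖ ^ 2 = ‖a₁‖ ^ 2 + ‖a₂‖ ^ 2 := by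
      rw [hsum, norm_add_sq_real, horth]; ring
    have hnn := hnormU w
    rw [hUa, h2n] at hnn
    have ha₁ : a₁ = 0 := by
      have h0 : ‖a₁‖ = 0 := by nlinarith [norm_nonneg a₁, norm_nonneg a₂]
      exact norm_eq_zero.mp h0
    rw [hsum, ha₁, zero_add]
    exact h2
  have hKNU : K ≤ NUᗮ :=
    Submodule.topologicalClosure_minimal _
      (Submodule.span_le.mpr (by rintro _ ⟨w, rfl⟩; exact hmodNU w))
      (Submodule.isClosed_orthogonal _)
  -- U = U₀ on K
  let W : Submodule ℝ H :=
    { carrier := {x | U x = U₀ x}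
      add_mem' := by
        intro a b ha hb
        simp only [Set.mem_setOf_eq] at *
        rw [map_add, map_add, ha, hb]
      zero_mem' := by simp only [Set.mem_setOf_eq, map_zero]
      smul_mem' := by
        intro r x hx
        simp only [Set.mem_setOf_eq] at *
        rw [hsm, map_smul, map_smul, hx] }
  have hKW : K ≤ W :=
    Submodule.topologicalClosure_minimal _
      (Submodule.span_le.mpr (by
        rintro _ ⟨w, rfl⟩
        show U (modA w) = U₀ (modA w)
        rw [← hAU, ← hAU₀]))
      (isClosed_eq U.continuous U₀.continuous)
  have hKUU₀ : ∀ k, k ∈ K → U k = U₀ k := fun k hk => hKW hk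
  -- ker P ⊆ K
  have hPK : ∀ y, P y = 0 → y ∈ K := by
    intro y hy
    obtain ⟨k, hk, z, hz, hsum⟩ := K.exists_add_mem_mem_orthogonal y
    have hmodz : modA z = 0 := by
      apply QHelp.eq_zero_of_self hinn
      have h1 : inn (modA (modA z)) z = inn (modA z) (modA z) := hmod_adj (modA z) z
      have h2 : (inn (modA (modA z)) z).re = 0 :=
        (Submodule.mem_orthogonal K z).mp hz _ (hKmem (modA z))
      rw [← h1]; exact h2
    have hAz : A z = 0 := hmod_ker z hmodz
    have hz0 : z = 0 := by
      apply QHelp.eq_zero_of_self hinn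
      have e1 : inn z y = 0 := by
        obtain ⟨m, hm⟩ : ∃ m, P m = z := by
          have h : z ∈ Set.range ⇑P := by rw [hPran]; exact hAz
          exact h
        rw [← hm, hPadj, hy, QHelp.zero_right hinn]
      have e2 : (inn z k).re = 0 := by
        rw [QHelp.re_symm hinn]
        exact (Submodule.mem_orthogonal K z).mp hz k hk
      have e3 := hinn.add_right z k z
      rw [← hsum, e1] at e3
      have e4 := congrArg QuaternionAlgebra.re e3
      rw [Quaternion.re_zero, Quaternion.re_add] at e4
      linarith
    rw [hsum, hz0, add_zero]
    exact hk
  -- inner-product preservation of U on NUᗮ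
  have hUinner : ∀ a b, a ∈ NUᗮ → b ∈ NUᗮ → (inn (U a) (U b)).re = (inn a b).re := by
    intro a b ha hb
    have hab : a + b ∈ NUᗮ := Submodule.add_mem _ ha hb
    have h1 := hNU_isom a ha
    have h2 := hNU_isom b hb
    have h3 := hNU_isom _ hab
    have e1 : ‖U a + U b‖ ^ 2 = ‖a + b‖ ^ 2 := by rw [← map_add, h3]
    rw [norm_add_sq_real, norm_add_sq_real, h1, h2] at e1
    have : @inner ℝ H _ (U a) (U b) = @inner ℝ H _ a b := by linarith
    exact this
  -- operator equation
  have part3 : U = U₀ + (U - U₀).comp P := by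
    ext x
    have hd : P (x - P x) = 0 := by rw [map_sub, hPP, sub_self]
    have hdK : x - P x ∈ K := hPK _ hd
    have hUU₀d : U (x - P x) = U₀ (x - P x) := hKUU₀ _ hdK
    rw [map_sub, map_sub] at hUU₀d
    show U x = U₀ x + (U (P x) - U₀ (P x))
    calc U x = U x - U (P x) + U (P x) := by abel
    _ = U₀ x - U₀ (P x) + U (P x) := by rw [hUU₀d]
    _ = U₀ x + (U (P x) - U₀ (P x)) := by abel
  -- range condition
  have part2 : ∀ x, A x = 0 → ∀ w, inn (A w) ((U - U₀) x) = 0 := by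
    intro x hxA w
    have hreal : ∀ x', A x' = 0 → (inn (A w) (U x')).re = 0 := by
      intro x' hx'
      obtain ⟨x₁, h1, x₂, h2, hsum⟩ := NU.exists_add_mem_mem_orthogonal x'
      have hUx' : U x' = U x₂ := by rw [hsum, map_add, show U x₁ = 0 from h1, zero_add]
      rw [hAU w, hUx', hUinner _ _ (hmodNU w) h2]
      have hx₂ : x₂ = x' - x₁ := by rw [hsum]; abel
      rw [hx₂, QHelp.sub_right hinn]
      have e1 : inn (modA w) x' = 0 := by
        rw [hmod_adj, hker_mod x' hx', QHelp.zero_right hinn]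
      have e2 : (inn (modA w) x₁).re = 0 := by
        rw [QHelp.re_symm hinn]
        exact (Submodule.mem_orthogonal NU (modA w)).mp (hmodNU w) x₁ h1
      rw [e1, zero_sub, Quaternion.re_neg, e2, neg_zero]
    rw [ContinuousLinearMap.sub_apply, hU₀0 x hxA, sub_zero]
    apply QHelp.quat_zero_of_mul_re
    intro q
    rw [← hinn.smul_right, ← map_smul]
    exact hreal _ (by rw [map_smul, hxA, smul_zero])
  -- partial isometry
  have part1 : ∀ x, (∀ y, (U - U₀) y = 0 → inn y x = 0) → ‖(U - U₀) x‖ = ‖x‖ := by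
    intro x hx
    have hmodx : modA x = 0 := by
      apply QHelp.eq_zero_of_self hinn
      have hmem : (U - U₀) (modA (modA x)) = 0 := by
        rw [ContinuousLinearMap.sub_apply, hKUU₀ _ (hKmem (modA x)), sub_self]
      have h := hx _ hmem
      rw [hmod_adj (modA x) x] at h
      rw [h, Quaternion.re_zero]
    have hAx : A x = 0 := hmod_ker x hmodx
    have hU₀x : U₀ x = 0 := hU₀0 x hAx
    obtain ⟨x₁, h1, x₂, h2, hsum⟩ := NU.exists_add_mem_mem_orthogonal x
    have hmodx₁ : modA x₁ = 0 := by
      apply QHelp.eq_zero_of_self hinn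
      have e : (inn x₁ (modA (modA x₁))).re = 0 :=
        (Submodule.mem_orthogonal NU _).mp (hmodNU (modA x₁)) x₁ h1
      rw [← hmod_adj (modA x₁) x₁, QHelp.re_symm hinn]
      exact e
    have hVx₁ : (U - U₀) x₁ = 0 := by
      rw [ContinuousLinearMap.sub_apply, show U x₁ = 0 from h1,
        hU₀0 x₁ (hmod_ker x₁ hmodx₁), sub_zero]
    have hx₁0 : x₁ = 0 := by
      apply QHelp.eq_zero_of_self hinn
      have e5 := hx x₁ hVx₁
      have e6 := hinn.add_right x₁ x₁ x₂
      rw [← hsum, e5] at e6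
      have e7 : (inn x₁ x₂).re = 0 := (Submodule.mem_orthogonal NU x₂).mp h2 x₁ h1
      have e8 := congrArg QuaternionAlgebra.re e6
      rw [Quaternion.re_zero, Quaternion.re_add, e7] at e8
      linarith
    have hxx₂ : x = x₂ := by rw [hsum, hx₁0, zero_add]
    rw [ContinuousLinearMap.sub_apply, hU₀x, sub_zero, hxx₂]
    exact hNU_isom x₂ h2
  refine ⟨U - U₀, ?_, ?_, part3⟩
  · exact fun x hx => part1 x hx
  · rintro x hx y ⟨w, rfl⟩
    exact part2 x hx w
end
end
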